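/- For every n ≥ 6, every n-vertex 3-graph with no two disjoint edges has at most binom(n−1,2) edges, i.e., ex^{(1)}(n;M) = binom(n−1,2); moreover, for n ≥ 7, the full star S_n is the unique (up to isomorphism) n-vertex 3-graph with no two disjoint edges having binom(n−1,2) edges. -/

import Mathlib

/-!
Common framework: 3-uniform hypergraphs (`3-graphs`) with vertex set a `Finset ℕ`,
copies/embeddings, isomorphism, connectivity, concrete 3-graphs from the paper,
and (higher order) Turán-extremality.
-/

structure ThreeGraph where
  verts : Finset ℕ
  edges : Finset (Finset ℕ)
  sub : ∀ e ∈ edges, e ⊆ verts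
  card3 : ∀ e ∈ edges, e.card = 3

namespace ThreeGraph

/-- The 3-graph on vertex set `V` whose edges are the 3-element subsets of `V`
satisfying the predicate `p`. -/
noncomputable def mk3 (V : Finset ℕ) (p : Finset ℕ → Prop) : ThreeGraph :=
  letI := Classical.decPred p
  { verts := V
    edges := (V.powersetCard 3).filter p
    sub := fun e he => (Finset.mem_powersetCard.mp (Finset.mem_filter.mp he).1).1
    card3 := fun e he => (Finset.mem_powersetCard.mp (Finset.mem_filter.mp he).1).2 }

/-- `H` contains a copy of `F` (i.e. a subhypergraph of `H` is isomorphic to `F`);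
equivalently, `F` embeds into `H`. -/
def HasCopy (F H : ThreeGraph) : Prop :=
  ∃ f : ℕ → ℕ, Set.InjOn f ↑F.verts ∧ (∀ v ∈ F.verts, f v ∈ H.verts) ∧
    ∀ e ∈ F.edges, e.image f ∈ H.edges

/-- `F` and `H` are isomorphic 3-graphs. -/
def Iso (F H : ThreeGraph) : Prop :=
  ∃ f : ℕ → ℕ, Set.InjOn f ↑F.verts ∧ F.verts.image f = H.verts ∧
    F.edges.image (fun e => e.image f) = H.edges

def Adj (H : ThreeGraph) (u v : ℕ) : Prop :=
  ∃ e ∈ H.edges, u ∈ e ∧ v ∈ e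

/-- Connectivity: any two vertices are joined by a walk
(consecutive vertices share an edge). -/
def Connected (H : ThreeGraph) : Prop :=
  ∀ u ∈ H.verts, ∀ v ∈ H.verts, Relation.ReflTransGen H.Adj u v

/-- `P`: the loose 3-uniform path of length three. -/
noncomputable def pathP : ThreeGraph :=
  mk3 (Finset.range 7) (fun e => e = {0,1,2} ∨ e = {2,3,4} ∨ e = {4,5,6})

/-- `C`: the triangle. -/
noncomputable def triC : ThreeGraph :=
  mk3 (Finset.range 6) (fun e => e = {0,1,2} ∨ e = {2,3,4} ∨ e = {4,5,0})

/-- `M`: a pair of disjoint edges. -/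
noncomputable def matchM : ThreeGraph :=
  mk3 (Finset.range 6) (fun e => e = {0,1,2} ∨ e = {3,4,5})

/-- `P₂`: a pair of edges sharing exactly one vertex. -/
noncomputable def path2 : ThreeGraph :=
  mk3 (Finset.range 5) (fun e => e = {0,1,2} ∨ e = {2,3,4})

/-- `P₂ ∪ K₃`. -/
noncomputable def p2K3 : ThreeGraph :=
  mk3 (Finset.range 8) (fun e => e = {0,1,2} ∨ e = {2,3,4} ∨ e = {5,6,7})

/-- `K_m`: the complete 3-graph on `m` vertices. -/
noncomputable def K (m : ℕ) : ThreeGraph := mk3 (Finset.range m) (fun _ => True)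

/-- `S_n`: the full star on `n` vertices, with center `0`. -/
noncomputable def starS (n : ℕ) : ThreeGraph := mk3 (Finset.range n) (fun e => 0 ∈ e)

/-- The comet `Co(n)`: `K₄` on `{0,1,2,3}` and the full star with center `0`
on `{0} ∪ {4,…,n-1}`. -/
noncomputable def comet (n : ℕ) : ThreeGraph :=
  mk3 (Finset.range n)
    (fun e => e ⊆ ({0,1,2,3} : Finset ℕ) ∨ (0 ∈ e ∧ ∀ v ∈ e, v = 0 ∨ 4 ≤ v))

/-- `G₁(n)` with `x,y,z = 0,1,2` and `v = 3`. -/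
noncomputable def G1 (n : ℕ) : ThreeGraph :=
  mk3 (Finset.range n)
    (fun e => e = {0,1,2} ∨ (3 ∈ e ∧ (e ∩ ({0,1,2} : Finset ℕ)).Nonempty))

/-- `G₂(n)` with `x,y,z = 0,1,2`. -/
noncomputable def G2 (n : ℕ) : ThreeGraph :=
  mk3 (Finset.range n)
    (fun e => e = {0,1,2} ∨ (e ∩ ({0,1,2} : Finset ℕ)).card = 2)

/-- `G₃(n)` with `x = 0`, `y₁,y₂ = 1,2`, `z₁,z₂ = 3,4`. -/
noncomputable def G3 (n : ℕ) : ThreeGraph :=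
  mk3 (Finset.range n)
    (fun e => (e ⊆ ({0,1,2,3,4} : Finset ℕ) ∧ e ≠ {1,2,3} ∧ e ≠ {1,2,4}) ∨
      (∃ v ∈ e, 5 ≤ v ∧ (e = {0,3,v} ∨ e = {0,4,v})))

/-- `K₅⁺²`: `K₅` on `{0,…,4}` with `a,b = 0,1`, `c,d = 5,6`. -/
noncomputable def K5plus2 : ThreeGraph :=
  mk3 (Finset.range 7)
    (fun e => e ⊆ ({0,1,2,3,4} : Finset ℕ) ∨ e = {0,1,5} ∨ e = {0,1,6})

/-- The rocket `Ro(n)`: the full star with center `x = 0` on `{0} ∪ {5,…,n-1}`,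
plus vertices `a,b,c,d = 1,2,3,4` and edges `{x,a,b}, {a,b,c}, {a,b,d}`. -/
noncomputable def rocket (n : ℕ) : ThreeGraph :=
  mk3 (Finset.range n)
    (fun e => (0 ∈ e ∧ ∀ v ∈ e, v = 0 ∨ 5 ≤ v) ∨ e = {0,1,2} ∨ e = {1,2,3} ∨ e = {1,2,4})

/-- `K₆ ∪ K₁`. -/
noncomputable def K6K1 : ThreeGraph :=
  mk3 (Finset.range 7) (fun e => e ⊆ Finset.range 6)

/-- `K₆ ∪ K_{n-6}`. -/
noncomputable def K6K (n : ℕ) : ThreeGraph :=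
  mk3 (Finset.range n) (fun e => e ⊆ Finset.range 6 ∨ ∀ v ∈ e, 6 ≤ v)

/-- `K₆ ∪ S_{n-6}` (star centered at `6`). -/
noncomputable def K6star (n : ℕ) : ThreeGraph :=
  mk3 (Finset.range n) (fun e => e ⊆ Finset.range 6 ∨ (6 ∈ e ∧ ∀ v ∈ e, 6 ≤ v))

/-- `K₄ ∪ S_{n-4}` (star centered at `4`). -/
noncomputable def K4star (n : ℕ) : ThreeGraph :=
  mk3 (Finset.range n) (fun e => e ⊆ Finset.range 4 ∨ (4 ∈ e ∧ ∀ v ∈ e, 4 ≤ v))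

/-- `K₆ ∪ K₆ ∪ K₁` (on 13 vertices). -/
noncomputable def K6K6K1 : ThreeGraph :=
  mk3 (Finset.range 13) (fun e => e ⊆ Finset.range 6 ∨ e ⊆ Finset.Ico 6 12)

/-- `2K₆ ∪ 2K₁` (on 14 vertices). -/
noncomputable def twoK6twoK1 : ThreeGraph :=
  mk3 (Finset.range 14) (fun e => e ⊆ Finset.range 6 ∨ e ⊆ Finset.Ico 6 12)

/-- `K₅ ∪ K₅`. -/
noncomputable def K5K5 : ThreeGraph :=
  mk3 (Finset.range 10) (fun e => e ⊆ Finset.range 5 ∨ ∀ v ∈ e, 5 ≤ v)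

/-- `K₆ ∪ G₁(7)` (with `G₁(7)` on `{6,…,12}`, `x,y,z = 6,7,8`, `v = 9`). -/
noncomputable def K6G1 : ThreeGraph :=
  mk3 (Finset.range 13)
    (fun e => e ⊆ Finset.range 6 ∨ ((∀ v ∈ e, 6 ≤ v) ∧
      (e = {6,7,8} ∨ (9 ∈ e ∧ (e ∩ ({6,7,8} : Finset ℕ)).Nonempty))))

/-- `K₆ ∪ G₂(7)` (with `G₂(7)` on `{6,…,12}`, `x,y,z = 6,7,8`). -/
noncomputable def K6G2 : ThreeGraph :=
  mk3 (Finset.range 13)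
    (fun e => e ⊆ Finset.range 6 ∨ ((∀ v ∈ e, 6 ≤ v) ∧
      (e = {6,7,8} ∨ (e ∩ ({6,7,8} : Finset ℕ)).card = 2)))

/-- `H` is a member of `S` with the maximum number of edges. -/
def IsMaxIn (S : Set ThreeGraph) (H : ThreeGraph) : Prop :=
  H ∈ S ∧ ∀ G ∈ S, G.edges.card ≤ H.edges.card

/-- `cand 𝓕 n s` is the set of `n`-vertex `𝓕`-free 3-graphs not contained in any
`t`-extremal 3-graph for `t ≤ s`; so the `(s+1)`-st order Turán number of `𝓕` is the
maximal number of edges over `cand 𝓕 n s`, and the `(s+1)`-extremal 3-graphs are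
exactly those satisfying `IsMaxIn (cand 𝓕 n s)`. -/
def cand (𝓕 : Set ThreeGraph) (n : ℕ) : ℕ → Set ThreeGraph
  | 0 => {H | H.verts.card = n ∧ ∀ F ∈ 𝓕, ¬ HasCopy F H}
  | (s+1) => {H | H ∈ cand 𝓕 n s ∧ ∀ H', IsMaxIn (cand 𝓕 n s) H' → ¬ HasCopy H H'}

end ThreeGraph

namespace EKR
open Finset

lemma pair_mem_decomp {p : Finset ℕ} {w : ℕ} (h2 : p.card = 2) (hw : w ∈ p) :
    ∃ z, z ≠ w ∧ p = {w, z} := by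
  obtain ⟨x, y, hxy, rfl⟩ := Finset.card_eq_two.mp h2
  rcases Finset.mem_insert.mp hw with rfl | hw'
  · exact ⟨y, fun h => hxy h.symm, rfl⟩
  · rcases Finset.mem_singleton.mp hw' with rfl
    exact ⟨x, fun h => hxy h, Finset.pair_comm x w⟩

lemma third_decomp {e : Finset ℕ} {a b : ℕ} (h3 : e.card = 3) (ha : a ∈ e) (hb : b ∈ e)
    (hab : a ≠ b) : ∃ z, z ≠ a ∧ z ≠ b ∧ e = {a, b, z} := by
  have hsub : ({a, b} : Finset ℕ) ⊆ e := by
    intro x hx; rcases Finset.mem_insert.mp hx with rfl | hx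
    · exact ha
    · rcases Finset.mem_singleton.mp hx; exact hb
  have hc2 : ({a, b} : Finset ℕ).card = 2 := Finset.card_pair hab
  have hcd : (e \ {a, b}).card = 1 := by
    rw [Finset.card_sdiff_of_subset hsub, h3, hc2]
  obtain ⟨z, hz⟩ := Finset.card_eq_one.mp hcd
  have hzm : z ∈ e \ {a, b} := hz ▸ Finset.mem_singleton_self z
  rw [Finset.mem_sdiff, Finset.mem_insert, Finset.mem_singleton] at hzm
  push_neg at hzm
  refine ⟨z, hzm.2.1 , hzm.2.2, ?_⟩
  have : e = {a, b} ∪ (e \ {a, b}) := by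
    rw [Finset.union_sdiff_of_subset hsub]
  rw [this, hz]
  ext x; simp [or_assoc]

/-- two distinct 2-sets that intersect share a unique point -/
lemma pair_share {p q : Finset ℕ} (hp : p.card = 2) (hq : q.card = 2) (hne : p ≠ q)
    (hint : (p ∩ q).Nonempty) : ∃ w s t, w ≠ s ∧ w ≠ t ∧ s ≠ t ∧ p = {w, s} ∧ q = {w, t} := by
  obtain ⟨w, hw⟩ := hint
  rw [Finset.mem_inter] at hw
  obtain ⟨s, hs, rfl⟩ := pair_mem_decomp hp hw.1
  obtain ⟨t, ht, rfl⟩ := pair_mem_decomp hq hw.2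
  refine ⟨w, s, t, fun h => hs h.symm, fun h => ht h.symm, ?_, rfl, rfl⟩
  rintro rfl; exact hne rfl

/-- meeting two pairs {w,s}, {w,t} forces w ∈ p or p = {s,t} -/
lemma meet_two {w s t : ℕ} {p : Finset ℕ} (hst : s ≠ t) (hp : p.card = 2)
    (h1 : (p ∩ ({w, s} : Finset ℕ)).Nonempty) (h2 : (p ∩ ({w, t} : Finset ℕ)).Nonempty) :
    w ∈ p ∨ p = {s, t} := by
  by_cases hw : w ∈ p
  · exact Or.inl hw
  · right
    obtain ⟨x, hx⟩ := h1; rw [Finset.mem_inter, Finset.mem_insert, Finset.mem_singleton] at hx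
    obtain ⟨y, hy⟩ := h2; rw [Finset.mem_inter, Finset.mem_insert, Finset.mem_singleton] at hy
    have hxs : s ∈ p := by
      rcases hx.2 with h | h
      · exact absurd (h ▸ hx.1) hw
      · exact h ▸ hx.1
    have hyt : t ∈ p := by
      rcases hy.2 with h | h
      · exact absurd (h ▸ hy.1) hw
      · exact h ▸ hy.1
    have hsub : ({s, t} : Finset ℕ) ⊆ p := by
      intro z hz; rcases Finset.mem_insert.mp hz with rfl | hz
      · exact hxs
      · rcases Finset.mem_singleton.mp hz; exact hyt
    exact (Finset.eq_of_subset_of_card_le hsub (by rw [hp, Finset.card_pair hst])).symm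


/-- star bound: all pairs through w, pairs inside W: card ≤ |W| - 1 -/
lemma card_star {W : Finset ℕ} {P : Finset (Finset ℕ)} {w : ℕ}
    (hP : ∀ p ∈ P, p.card = 2 ∧ p ⊆ W) (hw : ∀ p ∈ P, w ∈ p) :
    P.card ≤ W.card - 1 := by
  by_cases hwW : w ∈ W
  · have hsub : P ⊆ (W.erase w).image (fun y => ({w, y} : Finset ℕ)) := by
      intro p hp
      obtain ⟨h2, hW⟩ := hP p hp
      obtain ⟨z, hz, rfl⟩ := pair_mem_decomp h2 (hw p hp)
      exact Finset.mem_image.mpr ⟨z, Finset.mem_erase.mpr ⟨hz, hW (by simp)⟩, rfl⟩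
    calc P.card ≤ _ := Finset.card_le_card hsub
      _ ≤ (W.erase w).card := Finset.card_image_le
      _ = W.card - 1 := Finset.card_erase_of_mem hwW
  · have : P = ∅ := by
      rw [Finset.eq_empty_iff_forall_notMem]
      intro p hp
      exact hwW ((hP p hp).2 (hw p hp))
    simp [this]

/-- star-plus bound: all pairs through w or equal to s : card ≤ |W| -/
lemma card_starplus {W : Finset ℕ} {P : Finset (Finset ℕ)} {w : ℕ} {s : Finset ℕ}
    (hP : ∀ p ∈ P, p.card = 2 ∧ p ⊆ W) (hw : ∀ p ∈ P, w ∈ p ∨ p = s) :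
    P.card ≤ W.card := by
  classical
  have h1 : (P.filter (fun p => w ∈ p)).card ≤ W.card - 1 := by
    apply card_star (fun p hp => hP p (Finset.mem_filter.mp hp).1)
    exact fun p hp => (Finset.mem_filter.mp hp).2
  have h2 : (P.filter (fun p => ¬ w ∈ p)).card ≤ 1 := by
    apply Finset.card_le_one.mpr
    intro p hp q hq
    have hp' := Finset.mem_filter.mp hp
    have hq' := Finset.mem_filter.mp hq
    have e1 : p = s := (hw p hp'.1).resolve_left hp'.2
    have e2 : q = s := (hw q hq'.1).resolve_left hq'.2
    rw [e1, e2]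
  have h3 : (P.filter (fun p => w ∈ p)).card + (P.filter (fun p => ¬ w ∈ p)).card = P.card :=
    Finset.card_filter_add_card_filter_not _
  by_cases hWn : W.Nonempty
  · have : 1 ≤ W.card := Finset.card_pos.mpr hWn
    omega
  · rw [Finset.not_nonempty_iff_eq_empty] at hWn
    have : P = ∅ := by
      rw [Finset.eq_empty_iff_forall_notMem]
      intro p hp
      obtain ⟨h2', hW⟩ := hP p hp
      have : p = ∅ := by rw [hWn] at hW; exact Finset.subset_empty.mp hW
      rw [this] at h2'; simp at h2'
    simp [this]

/-- meets a fixed pair q ⊆ W : card ≤ 2|W| - 3 -/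
lemma card_meets_pair {W : Finset ℕ} {P : Finset (Finset ℕ)} {q : Finset ℕ}
    (hP : ∀ p ∈ P, p.card = 2 ∧ p ⊆ W) (hq2 : q.card = 2) (hqW : q ⊆ W)
    (hmeet : ∀ p ∈ P, (p ∩ q).Nonempty) :
    P.card ≤ 2 * W.card - 3 := by
  classical
  obtain ⟨x, y, hxy, rfl⟩ := Finset.card_eq_two.mp hq2
  have hxW : x ∈ W := hqW (by simp)
  have hyW : y ∈ W := hqW (by simp)
  have h1 : (P.filter (fun p => x ∈ p)).card ≤ W.card - 1 := by
    apply card_star (fun p hp => hP p (Finset.mem_filter.mp hp).1)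
    exact fun p hp => (Finset.mem_filter.mp hp).2
  have h2 : (P.filter (fun p => ¬ x ∈ p)).card ≤ W.card - 2 := by
    have hsub : P.filter (fun p => ¬ x ∈ p) ⊆
        ((W.erase x).erase y).image (fun z => ({y, z} : Finset ℕ)) := by
      intro p hp
      have hp' := Finset.mem_filter.mp hp
      obtain ⟨h2', hW⟩ := hP p hp'.1
      obtain ⟨u, hu⟩ := hmeet p hp'.1
      rw [Finset.mem_inter, Finset.mem_insert, Finset.mem_singleton] at hu
      have hyp : y ∈ p := by
        rcases hu.2 with h | h
        · exact absurd (h ▸ hu.1) hp'.2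
        · exact h ▸ hu.1
      obtain ⟨z, hz, rfl⟩ := pair_mem_decomp h2' hyp
      refine Finset.mem_image.mpr ⟨z, ?_, rfl⟩
      refine Finset.mem_erase.mpr ⟨hz, Finset.mem_erase.mpr ⟨?_, hW (by simp)⟩⟩
      rintro rfl; exact hp'.2 (by simp)
    calc _ ≤ _ := Finset.card_le_card hsub
      _ ≤ ((W.erase x).erase y).card := Finset.card_image_le
      _ ≤ W.card - 2 := by
        rw [Finset.card_erase_of_mem (Finset.mem_erase.mpr ⟨fun h => hxy h.symm, hyW⟩),
          Finset.card_erase_of_mem hxW]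
        omega
  have h3 : (P.filter (fun p => x ∈ p)).card + (P.filter (fun p => ¬ x ∈ p)).card = P.card :=
    Finset.card_filter_add_card_filter_not _
  have : 2 ≤ W.card := by
    have : ({x, y} : Finset ℕ).card ≤ W.card := Finset.card_le_card hqW
    rwa [Finset.card_pair hxy] at this
  omega

/-- pairs meeting two disjoint pairs {a,b}, {c,d} are transversals -/
lemma mem_trans {a b c d : ℕ} {p : Finset ℕ} (hp : p.card = 2)
    (hac : a ≠ c) (had : a ≠ d) (hbc : b ≠ c) (hbd : b ≠ d)
    (h1 : (p ∩ ({a, b} : Finset ℕ)).Nonempty) (h2 : (p ∩ ({c, d} : Finset ℕ)).Nonempty) :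
    p ∈ ({{a, c}, {a, d}, {b, c}, {b, d}} : Finset (Finset ℕ)) := by
  obtain ⟨u, hu⟩ := h1; rw [Finset.mem_inter, Finset.mem_insert, Finset.mem_singleton] at hu
  obtain ⟨v, hv⟩ := h2; rw [Finset.mem_inter, Finset.mem_insert, Finset.mem_singleton] at hv
  have huv : u ≠ v := by
    rcases hu.2 with rfl | rfl <;> rcases hv.2 with rfl | rfl <;> assumption
  have hsub : ({u, v} : Finset ℕ) ⊆ p := by
    intro z hz; rcases Finset.mem_insert.mp hz with rfl | hz
    · exact hu.1
    · rcases Finset.mem_singleton.mp hz; exact hv.1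
  have hpe : p = {u, v} :=
    (Finset.eq_of_subset_of_card_le hsub (by rw [hp, Finset.card_pair huv])).symm
  subst hpe
  simp only [Finset.mem_insert, Finset.mem_singleton]
  rcases hu.2 with rfl | rfl <;> rcases hv.2 with rfl | rfl <;> tauto

lemma card_le_two {P : Finset (Finset ℕ)} {q1 q2 : Finset ℕ}
    (h : P ⊆ {q1, q2}) : P.card ≤ 2 := by
  calc P.card ≤ _ := Finset.card_le_card h
    _ ≤ 2 := Finset.card_insert_le _ _ |>.trans (by simp)

lemma card_le_three {P : Finset (Finset ℕ)} {q1 q2 q3 : Finset ℕ}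
    (h : P ⊆ {q1, q2, q3}) : P.card ≤ 3 := by
  calc P.card ≤ _ := Finset.card_le_card h
    _ ≤ 3 := by
      apply (Finset.card_insert_le _ _).trans
      have := Finset.card_insert_le q2 ({q3} : Finset (Finset ℕ))
      simp at this ⊢; omega

lemma card_le_four {P : Finset (Finset ℕ)} {q1 q2 q3 q4 : Finset ℕ}
    (h : P ⊆ {q1, q2, q3, q4}) : P.card ≤ 4 := by
  calc P.card ≤ _ := Finset.card_le_card h
    _ ≤ 4 := by
      apply (Finset.card_insert_le _ _).trans
      have h1 := Finset.card_insert_le q2 ({q3, q4} : Finset (Finset ℕ))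
      have h2 := Finset.card_insert_le q3 ({q4} : Finset (Finset ℕ))
      simp at h1 h2 ⊢; omega

/-- intersection of two distinct 2-sets has card ≤ 1 -/
lemma inter_card_le_one {q1 q2 : Finset ℕ} (h1 : q1.card = 2) (h2 : q2.card = 2)
    (hne : q1 ≠ q2) : (q1 ∩ q2).card ≤ 1 := by
  by_contra h
  push_neg at h
  have hsub : q1 ∩ q2 ⊆ q1 := Finset.inter_subset_left
  have he1 : q1 ∩ q2 = q1 := by
    apply Finset.eq_of_subset_of_card_le hsub; omega
  have hsub2 : q1 ∩ q2 ⊆ q2 := Finset.inter_subset_right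
  have he2 : q1 ∩ q2 = q2 := by
    apply Finset.eq_of_subset_of_card_le hsub2; omega
  exact hne (he1 ▸ he2)

/-- Z ⊆ every pair of P bounds -/
lemma Z_le_two {Z : Finset ℕ} {P : Finset (Finset ℕ)} {q : Finset ℕ}
    (hq : q ∈ P) (hq2 : q.card = 2) (hZ : ∀ z ∈ Z, ∀ p ∈ P, z ∈ p) : Z.card ≤ 2 := by
  have : Z ⊆ q := fun z hz => hZ z hz q hq
  calc Z.card ≤ q.card := Finset.card_le_card this
    _ = 2 := hq2

lemma Z_le_one {Z : Finset ℕ} {P : Finset (Finset ℕ)} {q1 q2 : Finset ℕ}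
    (hq1 : q1 ∈ P) (hq2 : q2 ∈ P) (h1 : q1.card = 2) (h2 : q2.card = 2) (hne : q1 ≠ q2)
    (hZ : ∀ z ∈ Z, ∀ p ∈ P, z ∈ p) : Z.card ≤ 1 := by
  have : Z ⊆ q1 ∩ q2 := fun z hz =>
    Finset.mem_inter.mpr ⟨hZ z hz q1 hq1, hZ z hz q2 hq2⟩
  exact (Finset.card_le_card this).trans (inter_card_le_one h1 h2 hne)

lemma Z_eq_zero {Z : Finset ℕ} {P : Finset (Finset ℕ)} {q1 q2 : Finset ℕ}
    (hq1 : q1 ∈ P) (hq2 : q2 ∈ P) (hdisj : q1 ∩ q2 = ∅)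
    (hZ : ∀ z ∈ Z, ∀ p ∈ P, z ∈ p) : Z.card = 0 := by
  rw [Finset.card_eq_zero, Finset.eq_empty_iff_forall_notMem]
  intro z hz
  have : z ∈ q1 ∩ q2 := Finset.mem_inter.mpr ⟨hZ z hz q1 hq1, hZ z hz q2 hq2⟩
  rw [hdisj] at this; exact absurd this (Finset.notMem_empty z)


lemma inter_witness {p q : Finset ℕ} (h : (p ∩ q).Nonempty) : ∃ x, x ∈ p ∧ x ∈ q := by
  obtain ⟨x, hx⟩ := h; exact ⟨x, Finset.mem_inter.mp hx⟩

section TwoFamilies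
variable {W : Finset ℕ} {P Q : Finset (Finset ℕ)}

lemma disj_of_pairs {a b c d : ℕ} (hab : a ≠ b) (hcd : c ≠ d)
    (hdisj : ({a,b} : Finset ℕ) ∩ ({c,d} : Finset ℕ) = ∅) :
    a ≠ c ∧ a ≠ d ∧ b ≠ c ∧ b ≠ d := by
  rw [Finset.eq_empty_iff_forall_notMem] at hdisj
  refine ⟨?_, ?_, ?_, ?_⟩ <;> rintro rfl
  · exact hdisj a (by simp)
  · exact hdisj a (by simp)
  · exact hdisj b (by simp)
  · exact hdisj b (by simp)

lemma pair_inter_empty {a b c d : ℕ} (hac : a ≠ c) (had : a ≠ d) (hbc : b ≠ c) (hbd : b ≠ d) :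
    ({a,b} : Finset ℕ) ∩ ({c,d} : Finset ℕ) = ∅ := by
  rw [Finset.eq_empty_iff_forall_notMem]
  intro z hz
  rw [Finset.mem_inter, Finset.mem_insert, Finset.mem_singleton, Finset.mem_insert,
    Finset.mem_singleton] at hz
  rcases hz.1 with rfl | rfl <;> rcases hz.2 with h | h <;> simp_all

lemma two_wild (hP : ∀ p ∈ P, p.card = 2 ∧ p ⊆ W) (hQ : ∀ q ∈ Q, q.card = 2 ∧ q ⊆ W)
    (hQ2 : 2 ≤ Q.card)
    (cross : ∀ p ∈ P, ∀ q ∈ Q, (p ∩ q).Nonempty) (hm : 5 ≤ W.card)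
    (hwild : ∃ p ∈ P, ∃ p' ∈ P, p ∩ p' = ∅) :
    P.card + Q.card ≤ 2 * W.card - 2 := by
  classical
  obtain ⟨p, hp, p', hp', hdisj⟩ := hwild
  obtain ⟨a, b, hab, rfl⟩ := Finset.card_eq_two.mp (hP p hp).1
  obtain ⟨c, d, hcd, rfl⟩ := Finset.card_eq_two.mp (hP p' hp').1
  obtain ⟨hac, had, hbc, hbd⟩ := disj_of_pairs hab hcd hdisj
  have hQtrans : ∀ q ∈ Q, q ∈ ({{a,c},{a,d},{b,c},{b,d}} : Finset (Finset ℕ)) := by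
    intro q hq
    have h1 := cross _ hp q hq; rw [Finset.inter_comm] at h1
    have h2 := cross _ hp' q hq; rw [Finset.inter_comm] at h2
    exact mem_trans (hQ q hq).1 hac had hbc hbd h1 h2
  by_cases hQwild : ∃ q ∈ Q, ∃ q' ∈ Q, q ∩ q' = ∅
  · obtain ⟨q, hq, q', hq', hdisj'⟩ := hQwild
    obtain ⟨x, y, hxy, rfl⟩ := Finset.card_eq_two.mp (hQ q hq).1
    obtain ⟨u, v, huv, rfl⟩ := Finset.card_eq_two.mp (hQ q' hq').1
    obtain ⟨hxu, hxv, hyu, hyv⟩ := disj_of_pairs hxy huv hdisj'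
    have hPsub : P ⊆ ({{x,u},{x,v},{y,u},{y,v}} : Finset (Finset ℕ)) := by
      intro r hr
      exact mem_trans (hP r hr).1 hxu hxv hyu hyv (cross r hr _ hq) (cross r hr _ hq')
    have h1 : P.card ≤ 4 := card_le_four hPsub
    have h2 : Q.card ≤ 4 := card_le_four (fun q hq => hQtrans q hq)
    omega
  · push_neg at hQwild
    obtain ⟨u, hu, v, hv, huv⟩ := Finset.one_lt_card.mp hQ2
    have hint : (u ∩ v).Nonempty :=
      (hQwild u hu v hv)
    obtain ⟨w, s, t, hws, hwt, hst, hue, hve⟩ := pair_share (hQ u hu).1 (hQ v hv).1 huv hint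
    have hPb : P.card ≤ W.card := by
      apply card_starplus hP
      intro r hr
      exact meet_two hst (hP r hr).1 (hue ▸ cross r hr u hu) (hve ▸ cross r hr v hv)
    -- Q ⊆ transversals and internally intersecting ⟹ |Q| ≤ 2
    have hS1 : (Q ∩ ({{a,c},{b,d}} : Finset (Finset ℕ))).card ≤ 1 := by
      by_contra hcon
      push_neg at hcon
      have hsub : Q ∩ ({{a,c},{b,d}} : Finset (Finset ℕ)) ⊆ {{a,c},{b,d}} :=
        Finset.inter_subset_right
      have hcard : ({{a,c},{b,d}} : Finset (Finset ℕ)).card ≤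
          (Q ∩ ({{a,c},{b,d}} : Finset (Finset ℕ))).card := by
        have := card_le_two (Finset.Subset.refl ({{a,c},{b,d}} : Finset (Finset ℕ)))
        omega
      have heq := Finset.eq_of_subset_of_card_le hsub hcard
      have m1 : ({a,c} : Finset ℕ) ∈ Q := by
        have : ({a,c} : Finset ℕ) ∈ Q ∩ ({{a,c},{b,d}} : Finset (Finset ℕ)) := by
          rw [heq]; simp
        exact (Finset.mem_inter.mp this).1
      have m2 : ({b,d} : Finset ℕ) ∈ Q := by
        have : ({b,d} : Finset ℕ) ∈ Q ∩ ({{a,c},{b,d}} : Finset (Finset ℕ)) := by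
          rw [heq]; simp
        exact (Finset.mem_inter.mp this).1
      exact Finset.nonempty_iff_ne_empty.mp (hQwild _ m1 _ m2) (pair_inter_empty hab had (fun h => hbc h.symm) hcd)
    have hS2 : (Q ∩ ({{a,d},{b,c}} : Finset (Finset ℕ))).card ≤ 1 := by
      by_contra hcon
      push_neg at hcon
      have hsub : Q ∩ ({{a,d},{b,c}} : Finset (Finset ℕ)) ⊆ {{a,d},{b,c}} :=
        Finset.inter_subset_right
      have hcard : ({{a,d},{b,c}} : Finset (Finset ℕ)).card ≤
          (Q ∩ ({{a,d},{b,c}} : Finset (Finset ℕ))).card := by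
        have := card_le_two (Finset.Subset.refl ({{a,d},{b,c}} : Finset (Finset ℕ)))
        omega
      have heq := Finset.eq_of_subset_of_card_le hsub hcard
      have m1 : ({a,d} : Finset ℕ) ∈ Q := by
        have : ({a,d} : Finset ℕ) ∈ Q ∩ ({{a,d},{b,c}} : Finset (Finset ℕ)) := by
          rw [heq]; simp
        exact (Finset.mem_inter.mp this).1
      have m2 : ({b,c} : Finset ℕ) ∈ Q := by
        have : ({b,c} : Finset ℕ) ∈ Q ∩ ({{a,d},{b,c}} : Finset (Finset ℕ)) := by
          rw [heq]; simp
        exact (Finset.mem_inter.mp this).1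
      exact Finset.nonempty_iff_ne_empty.mp (hQwild _ m1 _ m2) (pair_inter_empty hab hac (fun h => hbd h.symm) (fun h => hcd h.symm))
    have hQle : Q.card ≤ 2 := by
      have hsplit : Q = (Q ∩ ({{a,c},{b,d}} : Finset (Finset ℕ))) ∪
          (Q ∩ ({{a,d},{b,c}} : Finset (Finset ℕ))) := by
        ext q
        simp only [Finset.mem_union, Finset.mem_inter, Finset.mem_insert, Finset.mem_singleton]
        constructor
        · intro hq
          have := hQtrans q hq
          simp only [Finset.mem_insert, Finset.mem_singleton] at this
          tauto
        · tauto
      calc Q.card = _ := by rw [← hsplit]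
        _ ≤ _ := Finset.card_union_le _ _
        _ ≤ 2 := by omega
    omega

lemma two_families (hP : ∀ p ∈ P, p.card = 2 ∧ p ⊆ W) (hQ : ∀ q ∈ Q, q.card = 2 ∧ q ⊆ W)
    (hPne : P.Nonempty) (hQne : Q.Nonempty)
    (cross : ∀ p ∈ P, ∀ q ∈ Q, (p ∩ q).Nonempty) (hm : 5 ≤ W.card) :
    P.card + Q.card ≤ 2 * W.card - 2 := by
  classical
  rcases Nat.lt_or_ge P.card 2 with hP1 | hP2
  · have hPc : P.card = 1 := by
      have := Finset.card_pos.mpr hPne; omega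
    obtain ⟨p0, hp0⟩ := Finset.card_eq_one.mp hPc
    have hp0P : p0 ∈ P := hp0 ▸ Finset.mem_singleton_self p0
    have hQb : Q.card ≤ 2 * W.card - 3 := by
      apply card_meets_pair hQ (hP p0 hp0P).1 (hP p0 hp0P).2
      intro q hq
      have := cross p0 hp0P q hq; rwa [Finset.inter_comm] at this
    omega
  rcases Nat.lt_or_ge Q.card 2 with hQ1 | hQ2
  · have hQc : Q.card = 1 := by
      have := Finset.card_pos.mpr hQne; omega
    obtain ⟨q0, hq0⟩ := Finset.card_eq_one.mp hQc
    have hq0Q : q0 ∈ Q := hq0 ▸ Finset.mem_singleton_self q0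
    have hPb : P.card ≤ 2 * W.card - 3 := by
      apply card_meets_pair hP (hQ q0 hq0Q).1 (hQ q0 hq0Q).2
      intro p hp
      exact cross p hp q0 hq0Q
    omega
  by_cases hPwild : ∃ p ∈ P, ∃ p' ∈ P, p ∩ p' = ∅
  · exact two_wild hP hQ hQ2 cross hm hPwild
  by_cases hQwild : ∃ q ∈ Q, ∃ q' ∈ Q, q ∩ q' = ∅
  · have := two_wild hQ hP hP2 (fun q hq p hp => by
      rw [Finset.inter_comm]; exact cross p hp q hq) hm hQwild
    omega
  push_neg at hPwild
  push_neg at hQwild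
  obtain ⟨u, hu, v, hv, huv⟩ := Finset.one_lt_card.mp hQ2
  have hint : (u ∩ v).Nonempty := (hQwild u hu v hv)
  obtain ⟨w, s, t, hws, hwt, hst, hue, hve⟩ := pair_share (hQ u hu).1 (hQ v hv).1 huv hint
  have hPcases : ∀ p ∈ P, w ∈ p ∨ p = {s, t} := by
    intro r hr
    exact meet_two hst (hP r hr).1 (hue ▸ cross r hr u hu) (hve ▸ cross r hr v hv)
  by_cases hPst : ∃ r ∈ P, w ∉ r
  · obtain ⟨r, hr, hwr⟩ := hPst
    have hrst : r = {s, t} := (hPcases r hr).resolve_left hwr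
    have hQb : Q.card ≤ W.card := by
      apply card_starplus hQ
      intro q hq
      have i1 : (q ∩ u).Nonempty := (hQwild q hq u hu)
      have i2 : (q ∩ v).Nonempty := (hQwild q hq v hv)
      exact meet_two hst (hQ q hq).1 (hue ▸ i1) (hve ▸ i2)
    have hPb : P.card ≤ 3 := by
      apply card_le_three (q1 := ({w,s} : Finset ℕ)) (q2 := ({w,t} : Finset ℕ))
        (q3 := ({s,t} : Finset ℕ))
      intro rr hrr
      rcases hPcases rr hrr with hwrr | hre
      · obtain ⟨z, hz, hrre⟩ := pair_mem_decomp (hP rr hrr).1 hwrr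
        have hmeet : (rr ∩ ({s,t} : Finset ℕ)).Nonempty := by
          have := hPwild rr hrr r hr
          rw [hrst] at this
          exact this
        obtain ⟨x, hx1, hx2⟩ := inter_witness hmeet
        rw [hrre] at hx1
        simp only [Finset.mem_insert, Finset.mem_singleton] at hx1 hx2
        simp only [Finset.mem_insert, Finset.mem_singleton]
        rcases hx1 with rfl | rfl
        · rcases hx2 with h | h <;> simp_all
        · rcases hx2 with rfl | rfl
          · left; exact hrre
          · right; left; exact hrre
      · simp [hre]
    omega
  · push_neg at hPst
    by_cases hQw : ∃ q ∈ Q, w ∉ q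
    · obtain ⟨q', hq', hwq'⟩ := hQw
      obtain ⟨p1, hp1, p2, hp2, hp12⟩ := Finset.one_lt_card.mp hP2
      obtain ⟨α, hα, he1⟩ := pair_mem_decomp (hP p1 hp1).1 (hPst p1 hp1)
      obtain ⟨β, hβ, he2⟩ := pair_mem_decomp (hP p2 hp2).1 (hPst p2 hp2)
      have hαβ : α ≠ β := by
        rintro rfl; exact hp12 (he1 ▸ he2 ▸ rfl)
      have hq'e : q' = {α, β} := by
        have c1 := cross p1 hp1 q' hq'
        have c2 := cross p2 hp2 q' hq'
        rw [he1, Finset.inter_comm] at c1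
        rw [he2, Finset.inter_comm] at c2
        exact (meet_two hαβ (hQ q' hq').1 c1 c2).resolve_left hwq'
      have hPb : P.card ≤ 2 := by
        apply card_le_two (q1 := ({w,α} : Finset ℕ)) (q2 := ({w,β} : Finset ℕ))
        intro r hr
        obtain ⟨z, hz, hre⟩ := pair_mem_decomp (hP r hr).1 (hPst r hr)
        have hmeet := cross r hr q' hq'
        rw [hq'e, hre] at hmeet
        obtain ⟨x, hx1, hx2⟩ := inter_witness hmeet
        simp only [Finset.mem_insert, Finset.mem_singleton] at hx1 hx2
        simp only [Finset.mem_insert, Finset.mem_singleton]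
        rcases hx1 with rfl | rfl
        · rcases hx2 with h | h
          · exact absurd h.symm hα
          · exact absurd h.symm hβ
        · rcases hx2 with rfl | rfl
          · left; exact hre
          · right; exact hre
      have hQb : Q.card ≤ W.card := by
        apply card_starplus hQ (s := ({α, β} : Finset ℕ))
        intro q hq
        have c1 := cross p1 hp1 q hq
        have c2 := cross p2 hp2 q hq
        rw [he1, Finset.inter_comm] at c1
        rw [he2, Finset.inter_comm] at c2
        exact meet_two hαβ (hQ q hq).1 c1 c2
      omega
    · push_neg at hQw
      have h1 : P.card ≤ W.card - 1 := card_star hP hPst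
      have h2 : Q.card ≤ W.card - 1 := card_star hQ hQw
      omega

end TwoFamilies


section ThreeFamilies
variable {W : Finset ℕ} {P1 P2 P3 : Finset (Finset ℕ)} {Z1 Z2 Z3 : Finset ℕ}

lemma pair_from_two_mems {r : Finset ℕ} {α β : ℕ} (h2 : r.card = 2) (hα : α ∈ r) (hβ : β ∈ r)
    (hne : α ≠ β) : r = {α, β} := by
  have hsub : ({α,β} : Finset ℕ) ⊆ r := by
    intro z hz; rcases Finset.mem_insert.mp hz with rfl | hz
    · exact hα
    · rcases Finset.mem_singleton.mp hz; exact hβ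
  exact (Finset.eq_of_subset_of_card_le hsub (by rw [h2, Finset.card_pair hne])).symm

lemma mem_pair_ne {x y a b c d : ℕ} (hx : x ∈ ({a,b} : Finset ℕ)) (hy : y ∈ ({c,d} : Finset ℕ))
    (hac : a ≠ c) (had : a ≠ d) (hbc : b ≠ c) (hbd : b ≠ d) : x ≠ y := by
  simp only [Finset.mem_insert, Finset.mem_singleton] at hx hy
  rcases hx with rfl | rfl <;> rcases hy with rfl | rfl <;> assumption

lemma pair_ne_pair {w s t : ℕ} (hws : w ≠ s) (hst : s ≠ t) :
    ({w,s} : Finset ℕ) ≠ {w,t} := by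
  intro h
  have hs : s ∈ ({w,t} : Finset ℕ) := h ▸ (by simp)
  simp only [Finset.mem_insert, Finset.mem_singleton] at hs
  rcases hs with rfl | rfl
  · exact hws rfl
  · exact hst rfl

lemma PZ_star {P : Finset (Finset ℕ)} {Z : Finset ℕ} {w : ℕ}
    (hF : ∀ p ∈ P, p.card = 2 ∧ p ⊆ W) (hne : P.Nonempty)
    (hstar : ∀ p ∈ P, w ∈ p) (hZ : ∀ z ∈ Z, ∀ p ∈ P, z ∈ p) (hm : 3 ≤ W.card) :
    P.card + Z.card ≤ W.card := by
  rcases Nat.lt_or_ge P.card 2 with h | h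
  · obtain ⟨q, hq⟩ := hne
    have := Z_le_two hq (hF q hq).1 hZ
    have := Finset.card_pos.mpr ⟨q, hq⟩
    omega
  · obtain ⟨q, hq, q', hq', hne'⟩ := Finset.one_lt_card.mp h
    have h1 := card_star hF hstar
    have h2 := Z_le_one hq hq' (hF q hq).1 (hF q' hq').1 hne' hZ
    omega

lemma Z_le_one_or {P : Finset (Finset ℕ)} {Z : Finset ℕ}
    (hF : ∀ p ∈ P, p.card = 2 ∧ p ⊆ W)
    (hZ : ∀ z ∈ Z, ∀ p ∈ P, z ∈ p) : P.card ≤ 1 ∨ Z.card ≤ 1 := by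
  rcases Nat.lt_or_ge P.card 2 with h | h
  · left; omega
  · obtain ⟨q, hq, q', hq', hne'⟩ := Finset.one_lt_card.mp h
    exact Or.inr (Z_le_one hq hq' (hF q hq).1 (hF q' hq').1 hne' hZ)

/-- disjoint-transversals configuration -/
lemma subD_core {a b c d : ℕ}
    (hab : a ≠ b) (hcd : c ≠ d) (hac : a ≠ c) (had : a ≠ d) (hbc : b ≠ c) (hbd : b ≠ d)
    (hF1 : ∀ p ∈ P1, p.card = 2 ∧ p ⊆ W) (hF2 : ∀ p ∈ P2, p.card = 2 ∧ p ⊆ W)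
    (hF3 : ∀ p ∈ P3, p.card = 2 ∧ p ⊆ W)
    (ne2 : P2.Nonempty)
    (c12 : ∀ p ∈ P1, ∀ q ∈ P2, (p ∩ q).Nonempty)
    (c13 : ∀ p ∈ P1, ∀ q ∈ P3, (p ∩ q).Nonempty)
    (c23 : ∀ p ∈ P2, ∀ q ∈ P3, (p ∩ q).Nonempty)
    (hZ1 : ∀ z ∈ Z1, ∀ p ∈ P1, z ∈ p) (hZ2 : ∀ z ∈ Z2, ∀ p ∈ P2, z ∈ p)
    (hZ3 : ∀ z ∈ Z3, ∀ p ∈ P3, z ∈ p)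
    (hm : 4 ≤ W.card)
    (hpP3 : ({a,b} : Finset ℕ) ∈ P3) (hp'P3 : ({c,d} : Finset ℕ) ∈ P3)
    (ht1 : ({a,c} : Finset ℕ) ∈ P1) (ht1' : ({b,d} : Finset ℕ) ∈ P1) :
    P1.card + P2.card + P3.card + Z1.card + Z2.card + Z3.card ≤ 3 * W.card := by
  have hP1b : P1.card ≤ 4 := by
    apply card_le_four (q1 := ({a,c} : Finset ℕ)) (q2 := ({a,d} : Finset ℕ))
      (q3 := ({b,c} : Finset ℕ)) (q4 := ({b,d} : Finset ℕ))
    intro r hr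
    exact mem_trans (hF1 r hr).1 hac had hbc hbd (c13 r hr _ hpP3) (c13 r hr _ hp'P3)
  have hP3b : P3.card ≤ 4 := by
    apply card_le_four (q1 := ({a,b} : Finset ℕ)) (q2 := ({a,d} : Finset ℕ))
      (q3 := ({c,b} : Finset ℕ)) (q4 := ({c,d} : Finset ℕ))
    intro r hr
    have h1 := c13 _ ht1 r hr; rw [Finset.inter_comm] at h1
    have h2 := c13 _ ht1' r hr; rw [Finset.inter_comm] at h2
    exact mem_trans (hF3 r hr).1 hab (fun h => had h) (fun h => hbc h.symm)
      (fun h => hcd h) h1 h2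
  have hP2b : P2.card ≤ 2 := by
    apply card_le_two (q1 := ({a,d} : Finset ℕ)) (q2 := ({b,c} : Finset ℕ))
    intro q hq
    obtain ⟨x, hx1, hx2⟩ := inter_witness (c23 q hq _ hpP3)
    obtain ⟨y, hy1, hy2⟩ := inter_witness (c23 q hq _ hp'P3)
    have hxy : x ≠ y := mem_pair_ne hx2 hy2 hac had hbc hbd
    have hqe : q = {x,y} := pair_from_two_mems (hF2 q hq).1 hx1 hy1 hxy
    simp only [Finset.mem_insert, Finset.mem_singleton] at hx2 hy2
    simp only [Finset.mem_insert, Finset.mem_singleton]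
    rcases hx2 with rfl | rfl <;> rcases hy2 with rfl | rfl
    · -- q = {a,c} : must meet {b,d} ∈ P1 : contradiction
      exfalso
      have hm1 := c12 _ ht1' q hq
      rw [Finset.inter_comm, hqe] at hm1
      obtain ⟨z, hz1, hz2⟩ := inter_witness hm1
      simp only [Finset.mem_insert, Finset.mem_singleton] at hz1 hz2
      rcases hz1 with rfl | rfl <;> rcases hz2 with h | h <;> simp_all
    · left; exact hqe
    · right; exact hqe
    · -- q = {b,d} : must meet {a,c} ∈ P1 : contradiction
      exfalso
      have hm1 := c12 _ ht1 q hq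
      rw [Finset.inter_comm, hqe] at hm1
      obtain ⟨z, hz1, hz2⟩ := inter_witness hm1
      simp only [Finset.mem_insert, Finset.mem_singleton] at hz1 hz2
      rcases hz1 with rfl | rfl <;> rcases hz2 with h | h <;> simp_all
  have hZ1b : Z1.card = 0 :=
    Z_eq_zero ht1 ht1' (pair_inter_empty hab (fun h => had h) (fun h => hbc h.symm)
      (fun h => hcd h)) hZ1
  have hZ3b : Z3.card = 0 := Z_eq_zero hpP3 hp'P3 (pair_inter_empty hac had hbc hbd) hZ3
  obtain ⟨q2, hq2⟩ := ne2
  have hZ2b : Z2.card ≤ 2 := Z_le_two hq2 (hF2 q2 hq2).1 hZ2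
  omega

/-- shared-transversals configuration : t1 = {w,x}, t1' = {w,y} ∈ P1, p = {w,u}, p' = {x,y} ∈ P3 -/
lemma subS_core {w u x y : ℕ}
    (hwu : w ≠ u) (hwx : w ≠ x) (hwy : w ≠ y) (hux : u ≠ x) (huy : u ≠ y) (hxy : x ≠ y)
    (hF1 : ∀ p ∈ P1, p.card = 2 ∧ p ⊆ W) (hF2 : ∀ p ∈ P2, p.card = 2 ∧ p ⊆ W)
    (hF3 : ∀ p ∈ P3, p.card = 2 ∧ p ⊆ W)
    (ne2 : P2.Nonempty)
    (c12 : ∀ p ∈ P1, ∀ q ∈ P2, (p ∩ q).Nonempty)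
    (c13 : ∀ p ∈ P1, ∀ q ∈ P3, (p ∩ q).Nonempty)
    (c23 : ∀ p ∈ P2, ∀ q ∈ P3, (p ∩ q).Nonempty)
    (hZ1 : ∀ z ∈ Z1, ∀ p ∈ P1, z ∈ p) (hZ2 : ∀ z ∈ Z2, ∀ p ∈ P2, z ∈ p)
    (hZ3 : ∀ z ∈ Z3, ∀ p ∈ P3, z ∈ p)
    (hm : 4 ≤ W.card)
    (hpP3 : ({w,u} : Finset ℕ) ∈ P3) (hp'P3 : ({x,y} : Finset ℕ) ∈ P3)
    (ht1 : ({w,x} : Finset ℕ) ∈ P1) (ht1' : ({w,y} : Finset ℕ) ∈ P1) :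
    P1.card + P2.card + P3.card + Z1.card + Z2.card + Z3.card ≤ 3 * W.card := by
  have hP3b : P3.card ≤ W.card := by
    apply card_starplus hF3 (s := ({x,y} : Finset ℕ))
    intro r hr
    have h1 := c13 _ ht1 r hr; rw [Finset.inter_comm] at h1
    have h2 := c13 _ ht1' r hr; rw [Finset.inter_comm] at h2
    exact meet_two hxy (hF3 r hr).1 h1 h2
  have hP2mem : ∀ q ∈ P2, q ∈ ({{w,x},{w,y}} : Finset (Finset ℕ)) := by
    intro q hq
    have h1 := c12 _ ht1 q hq; rw [Finset.inter_comm] at h1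
    have h2 := c12 _ ht1' q hq; rw [Finset.inter_comm] at h2
    rcases meet_two hxy (hF2 q hq).1 h1 h2 with hwq | hqe
    · obtain ⟨z, hz, hqe⟩ := pair_mem_decomp (hF2 q hq).1 hwq
      have hmeet := c23 q hq _ hp'P3
      rw [hqe] at hmeet
      obtain ⟨α, hα1, hα2⟩ := inter_witness hmeet
      simp only [Finset.mem_insert, Finset.mem_singleton] at hα1 hα2
      simp only [Finset.mem_insert, Finset.mem_singleton]
      rcases hα1 with rfl | rfl
      · rcases hα2 with h | h
        · exact absurd h hwx
        · exact absurd h hwy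
      · rcases hα2 with rfl | rfl
        · left; exact hqe
        · right; exact hqe
    · exfalso
      have hmeet := c23 q hq _ hpP3
      rw [hqe] at hmeet
      obtain ⟨α, hα1, hα2⟩ := inter_witness hmeet
      simp only [Finset.mem_insert, Finset.mem_singleton] at hα1 hα2
      rcases hα1 with rfl | rfl <;> rcases hα2 with h | h <;> simp_all
  have hP2b : P2.card ≤ 2 := card_le_two (fun q hq => hP2mem q hq)
  obtain ⟨q2, hq2⟩ := ne2
  have hq2mem := hP2mem q2 hq2
  simp only [Finset.mem_insert, Finset.mem_singleton] at hq2mem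
  have hP1b : P1.card ≤ 3 := by
    rcases hq2mem with hq2e | hq2e
    · -- q2 = {w,x} : P1 ⊆ {{w,x},{w,y},{u,x}}
      apply card_le_three (q1 := ({w,x} : Finset ℕ)) (q2 := ({w,y} : Finset ℕ))
        (q3 := ({u,x} : Finset ℕ))
      intro r hr
      obtain ⟨α, hα1, hα2⟩ := inter_witness (c13 r hr _ hpP3)
      obtain ⟨β, hβ1, hβ2⟩ := inter_witness (c13 r hr _ hp'P3)
      have hαβ : α ≠ β := mem_pair_ne hα2 hβ2 hwx hwy hux huy
      have hre : r = {α,β} := pair_from_two_mems (hF1 r hr).1 hα1 hβ1 hαβ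
      simp only [Finset.mem_insert, Finset.mem_singleton] at hα2 hβ2
      simp only [Finset.mem_insert, Finset.mem_singleton]
      rcases hα2 with rfl | rfl <;> rcases hβ2 with rfl | rfl
      · left; exact hre
      · right; left; exact hre
      · right; right; exact hre
      · exfalso
        have hmeet := c12 r hr q2 hq2
        rw [hre, hq2e] at hmeet
        obtain ⟨z, hz1, hz2⟩ := inter_witness hmeet
        simp only [Finset.mem_insert, Finset.mem_singleton] at hz1 hz2
        rcases hz1 with rfl | rfl <;> rcases hz2 with h | h <;> simp_all
    · -- q2 = {w,y} : P1 ⊆ {{w,x},{w,y},{u,y}}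
      apply card_le_three (q1 := ({w,x} : Finset ℕ)) (q2 := ({w,y} : Finset ℕ))
        (q3 := ({u,y} : Finset ℕ))
      intro r hr
      obtain ⟨α, hα1, hα2⟩ := inter_witness (c13 r hr _ hpP3)
      obtain ⟨β, hβ1, hβ2⟩ := inter_witness (c13 r hr _ hp'P3)
      have hαβ : α ≠ β := mem_pair_ne hα2 hβ2 hwx hwy hux huy
      have hre : r = {α,β} := pair_from_two_mems (hF1 r hr).1 hα1 hβ1 hαβ
      simp only [Finset.mem_insert, Finset.mem_singleton] at hα2 hβ2
      simp only [Finset.mem_insert, Finset.mem_singleton]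
      rcases hα2 with rfl | rfl <;> rcases hβ2 with rfl | rfl
      · left; exact hre
      · right; left; exact hre
      · exfalso
        have hmeet := c12 r hr q2 hq2
        rw [hre, hq2e] at hmeet
        obtain ⟨z, hz1, hz2⟩ := inter_witness hmeet
        simp only [Finset.mem_insert, Finset.mem_singleton] at hz1 hz2
        rcases hz1 with rfl | rfl <;> rcases hz2 with h | h <;> simp_all
      · right; right; exact hre
  have hZ1b : Z1.card ≤ 1 :=
    Z_le_one ht1 ht1' (hF1 _ ht1).1 (hF1 _ ht1').1 (pair_ne_pair hwx hxy) hZ1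
  have hZ3b : Z3.card = 0 :=
    Z_eq_zero hpP3 hp'P3 (pair_inter_empty hwx hwy hux huy) hZ3
  have hZ2b : Z2.card ≤ 2 := Z_le_two hq2 (hF2 q2 hq2).1 hZ2
  omega

end ThreeFamilies


section ThreeFamilies2
variable {W : Finset ℕ} {P1 P2 P3 : Finset (Finset ℕ)} {Z1 Z2 Z3 : Finset ℕ}

lemma helperW2
    (hF1 : ∀ p ∈ P1, p.card = 2 ∧ p ⊆ W) (hF2 : ∀ p ∈ P2, p.card = 2 ∧ p ⊆ W)
    (hF3 : ∀ p ∈ P3, p.card = 2 ∧ p ⊆ W)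
    (ne2 : P2.Nonempty)
    (c12 : ∀ p ∈ P1, ∀ q ∈ P2, (p ∩ q).Nonempty)
    (c13 : ∀ p ∈ P1, ∀ q ∈ P3, (p ∩ q).Nonempty)
    (c23 : ∀ p ∈ P2, ∀ q ∈ P3, (p ∩ q).Nonempty)
    (hZ1 : ∀ z ∈ Z1, ∀ p ∈ P1, z ∈ p) (hZ2 : ∀ z ∈ Z2, ∀ p ∈ P2, z ∈ p)
    (hZ3 : ∀ z ∈ Z3, ∀ p ∈ P3, z ∈ p)
    (hm : 4 ≤ W.card)
    (hwild : ∃ p ∈ P3, ∃ p' ∈ P3, p ∩ p' = ∅) (h2P1 : 2 ≤ P1.card) :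
    P1.card + P2.card + P3.card + Z1.card + Z2.card + Z3.card ≤ 3 * W.card := by
  obtain ⟨p, hp, p', hp', hdisj⟩ := hwild
  obtain ⟨a, b, hab, hpe⟩ := Finset.card_eq_two.mp (hF3 p hp).1
  obtain ⟨c, d, hcd, hp'e⟩ := Finset.card_eq_two.mp (hF3 p' hp').1
  obtain ⟨hac, had, hbc, hbd⟩ := disj_of_pairs hab hcd (hpe ▸ hp'e ▸ hdisj)
  subst hpe; subst hp'e
  obtain ⟨t1, ht1, t2, ht2, ht12⟩ := Finset.one_lt_card.mp h2P1
  obtain ⟨x1, hx1t, hx1p⟩ := inter_witness (c13 t1 ht1 _ hp)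
  obtain ⟨y1, hy1t, hy1p⟩ := inter_witness (c13 t1 ht1 _ hp')
  obtain ⟨x2, hx2t, hx2p⟩ := inter_witness (c13 t2 ht2 _ hp)
  obtain ⟨y2, hy2t, hy2p⟩ := inter_witness (c13 t2 ht2 _ hp')
  have hx1y1 : x1 ≠ y1 := mem_pair_ne hx1p hy1p hac had hbc hbd
  have hx2y2 : x2 ≠ y2 := mem_pair_ne hx2p hy2p hac had hbc hbd
  have ht1e : t1 = {x1, y1} := pair_from_two_mems (hF1 t1 ht1).1 hx1t hy1t hx1y1
  have ht2e : t2 = {x2, y2} := pair_from_two_mems (hF1 t2 ht2).1 hx2t hy2t hx2y2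
  by_cases hshare : (t1 ∩ t2).Nonempty
  · -- shared point w
    obtain ⟨w, hwt1, hwt2⟩ := inter_witness hshare
    have hwt1' : w = x1 ∨ w = y1 := by
      rw [ht1e] at hwt1
      simpa using hwt1
    have hwt2' : w = x2 ∨ w = y2 := by
      rw [ht2e] at hwt2
      simpa using hwt2
    rcases hwt1' with hA | hA
    · -- w = x1 ∈ {a,b} : shared point is x1
      have hx21 : x2 = x1 := by
        rcases hwt2' with h | h
        · rw [← h, ← hA]
        · exfalso
          exact (mem_pair_ne hx1p hy2p hac had hbc hbd) (hA ▸ h : x1 = y2)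
      have ht2e' : t2 = {x1, y2} := by rw [ht2e, hx21]
      have hy12 : y1 ≠ y2 := by
        rintro rfl; exact ht12 (ht1e ▸ ht2e' ▸ rfl)
      obtain ⟨u, hu, hpe2⟩ := pair_mem_decomp (hF3 _ hp).1 hx1p
      have hp'e2 : ({c,d} : Finset ℕ) = {y1, y2} :=
        pair_from_two_mems (hF3 _ hp').1 hy1p hy2p hy12
      have hwu : x1 ≠ u := fun h => hu h.symm
      have hwy2 : x1 ≠ y2 := mem_pair_ne hx1p hy2p hac had hbc hbd
      have humem : u ∈ ({a,b} : Finset ℕ) := by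
        have h0 : u ∈ ({x1, u} : Finset ℕ) := by simp
        rw [← hpe2] at h0; exact h0
      have huy1 : u ≠ y1 := mem_pair_ne humem hy1p hac had hbc hbd
      have huy2 : u ≠ y2 := mem_pair_ne humem hy2p hac had hbc hbd
      exact subS_core hwu hx1y1 hwy2 huy1 huy2 hy12 hF1 hF2 hF3 ne2 c12 c13 c23
        hZ1 hZ2 hZ3 hm (hpe2 ▸ hp) (hp'e2 ▸ hp') (ht1e ▸ ht1) (ht2e' ▸ ht2)
    · -- w = y1 ∈ {c,d} : shared point is y1 ; p and p' swap roles
      have hy21 : y2 = y1 := by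
        rcases hwt2' with h | h
        · exfalso
          exact (mem_pair_ne hx2p hy1p hac had hbc hbd) ((hA ▸ h : y1 = x2)).symm
        · rw [← h, ← hA]
      have ht2e' : t2 = {y1, x2} := by rw [ht2e, hy21, Finset.pair_comm]
      have ht1e' : t1 = {y1, x1} := by rw [ht1e, Finset.pair_comm]
      have hx12 : x1 ≠ x2 := by
        rintro rfl; exact ht12 (ht1e' ▸ ht2e' ▸ rfl)
      obtain ⟨u, hu, hp'e2⟩ := pair_mem_decomp (hF3 _ hp').1 hy1p
      have hpe2 : ({a,b} : Finset ℕ) = {x1, x2} :=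
        pair_from_two_mems (hF3 _ hp).1 hx1p hx2p hx12
      have hwu : y1 ≠ u := fun h => hu h.symm
      have hwx1 : y1 ≠ x1 := hx1y1.symm
      have hwx2 : y1 ≠ x2 := (mem_pair_ne hx2p hy1p hac had hbc hbd).symm
      have humem : u ∈ ({c,d} : Finset ℕ) := by
        have h0 : u ∈ ({y1, u} : Finset ℕ) := by simp
        rw [← hp'e2] at h0; exact h0
      have hux1 : u ≠ x1 := (mem_pair_ne hx1p humem hac had hbc hbd).symm
      have hux2 : u ≠ x2 := (mem_pair_ne hx2p humem hac had hbc hbd).symm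
      exact subS_core hwu hwx1 hwx2 hux1 hux2 hx12 hF1 hF2 hF3 ne2 c12 c13 c23
        hZ1 hZ2 hZ3 hm (hp'e2 ▸ hp') (hpe2 ▸ hp) (ht1e' ▸ ht1) (ht2e' ▸ ht2)
  · -- t1, t2 disjoint
    have hdisj2 : t1 ∩ t2 = ∅ := Finset.not_nonempty_iff_eq_empty.mp hshare
    have hx12 : x1 ≠ x2 := by
      rintro rfl
      have : x1 ∈ t1 ∩ t2 := Finset.mem_inter.mpr ⟨hx1t, hx2t⟩
      rw [hdisj2] at this; exact absurd this (Finset.notMem_empty _)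
    have hy12 : y1 ≠ y2 := by
      rintro rfl
      have : y1 ∈ t1 ∩ t2 := Finset.mem_inter.mpr ⟨hy1t, hy2t⟩
      rw [hdisj2] at this; exact absurd this (Finset.notMem_empty _)
    have hpe2 : ({a,b} : Finset ℕ) = {x1, x2} :=
      pair_from_two_mems (hF3 _ hp).1 hx1p hx2p hx12
    have hp'e2 : ({c,d} : Finset ℕ) = {y1, y2} :=
      pair_from_two_mems (hF3 _ hp').1 hy1p hy2p hy12
    have hx1y2 : x1 ≠ y2 := mem_pair_ne hx1p hy2p hac had hbc hbd
    have hx2y1 : x2 ≠ y1 := mem_pair_ne hx2p hy1p hac had hbc hbd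
    exact subD_core hx12 hy12 hx1y1 hx1y2 hx2y1 hx2y2 hF1 hF2 hF3 ne2 c12 c13 c23
      hZ1 hZ2 hZ3 hm (hpe2 ▸ hp) (hp'e2 ▸ hp') (ht1e ▸ ht1) (ht2e ▸ ht2)

end ThreeFamilies2


section ThreeFamilies3
variable {W : Finset ℕ} {P1 P2 P3 : Finset (Finset ℕ)} {Z1 Z2 Z3 : Finset ℕ}

lemma helperW
    (hF1 : ∀ p ∈ P1, p.card = 2 ∧ p ⊆ W) (hF2 : ∀ p ∈ P2, p.card = 2 ∧ p ⊆ W)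
    (hF3 : ∀ p ∈ P3, p.card = 2 ∧ p ⊆ W)
    (ne1 : P1.Nonempty) (ne2 : P2.Nonempty)
    (c12 : ∀ p ∈ P1, ∀ q ∈ P2, (p ∩ q).Nonempty)
    (c13 : ∀ p ∈ P1, ∀ q ∈ P3, (p ∩ q).Nonempty)
    (c23 : ∀ p ∈ P2, ∀ q ∈ P3, (p ∩ q).Nonempty)
    (hZ1 : ∀ z ∈ Z1, ∀ p ∈ P1, z ∈ p) (hZ2 : ∀ z ∈ Z2, ∀ p ∈ P2, z ∈ p)
    (hZ3 : ∀ z ∈ Z3, ∀ p ∈ P3, z ∈ p)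
    (hm : 4 ≤ W.card)
    (hwild : ∃ p ∈ P3, ∃ p' ∈ P3, p ∩ p' = ∅) :
    P1.card + P2.card + P3.card + Z1.card + Z2.card + Z3.card ≤ 3 * W.card := by
  rcases Nat.lt_or_ge P1.card 2 with hP1c | hP1c
  · rcases Nat.lt_or_ge P2.card 2 with hP2c | hP2c
    · -- both singletons
      have hP1e : P1.card = 1 := by have := Finset.card_pos.mpr ne1; omega
      have hP2e : P2.card = 1 := by have := Finset.card_pos.mpr ne2; omega
      obtain ⟨q1, hq1e⟩ := Finset.card_eq_one.mp hP1e
      obtain ⟨q2, hq2e⟩ := Finset.card_eq_one.mp hP2e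
      have hq1 : q1 ∈ P1 := hq1e ▸ Finset.mem_singleton_self q1
      have hq2 : q2 ∈ P2 := hq2e ▸ Finset.mem_singleton_self q2
      obtain ⟨p, hp, p', hp', hdisj⟩ := hwild
      have hZ3b : Z3.card = 0 := Z_eq_zero hp hp' hdisj hZ3
      have hZ1b : Z1.card ≤ 2 := Z_le_two hq1 (hF1 q1 hq1).1 hZ1
      have hZ2b : Z2.card ≤ 2 := Z_le_two hq2 (hF2 q2 hq2).1 hZ2
      by_cases hq12 : q1 = q2
      · have hP3b : P3.card ≤ 2 * W.card - 3 := by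
          apply card_meets_pair hF3 (hF1 q1 hq1).1 (hF1 q1 hq1).2
          intro r hr
          have := c13 q1 hq1 r hr; rwa [Finset.inter_comm] at this
        omega
      · by_cases hint : (q1 ∩ q2).Nonempty
        · obtain ⟨w, s, t, hws, hwt, hst, hq1d, hq2d⟩ :=
            pair_share (hF1 q1 hq1).1 (hF2 q2 hq2).1 hq12 hint
          have hP3b : P3.card ≤ W.card := by
            apply card_starplus hF3 (s := ({s,t} : Finset ℕ))
            intro r hr
            have h1 := c13 q1 hq1 r hr; rw [hq1d, Finset.inter_comm] at h1
            have h2 := c23 q2 hq2 r hr; rw [hq2d, Finset.inter_comm] at h2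
            exact meet_two hst (hF3 r hr).1 h1 h2
          omega
        · have hdq : q1 ∩ q2 = ∅ := Finset.not_nonempty_iff_eq_empty.mp hint
          obtain ⟨x, y, hxy, hq1d⟩ := Finset.card_eq_two.mp (hF1 q1 hq1).1
          obtain ⟨u, v, huv, hq2d⟩ := Finset.card_eq_two.mp (hF2 q2 hq2).1
          obtain ⟨hxu, hxv, hyu, hyv⟩ := disj_of_pairs hxy huv (hq1d ▸ hq2d ▸ hdq)
          have hP3b : P3.card ≤ 4 := by
            apply card_le_four (q1 := ({x,u} : Finset ℕ)) (q2 := ({x,v} : Finset ℕ))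
              (q3 := ({y,u} : Finset ℕ)) (q4 := ({y,v} : Finset ℕ))
            intro r hr
            have h1 := c13 q1 hq1 r hr; rw [hq1d, Finset.inter_comm] at h1
            have h2 := c23 q2 hq2 r hr; rw [hq2d, Finset.inter_comm] at h2
            exact mem_trans (hF3 r hr).1 hxu hxv hyu hyv h1 h2
          omega
    · -- 2 ≤ |P2| : swap roles of P1, P2
      have := helperW2 hF2 hF1 hF3 ne1
        (fun q hq p hp => by rw [Finset.inter_comm]; exact c12 p hp q hq)
        c23 c13 hZ2 hZ1 hZ3 hm hwild hP2c
      omega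
  · exact helperW2 hF1 hF2 hF3 ne2 c12 c13 c23 hZ1 hZ2 hZ3 hm hwild hP1c

lemma tame_core {w s t : ℕ} (hws : w ≠ s) (hwt : w ≠ t) (hst : s ≠ t)
    (hF1 : ∀ p ∈ P1, p.card = 2 ∧ p ⊆ W) (hF2 : ∀ p ∈ P2, p.card = 2 ∧ p ⊆ W)
    (hF3 : ∀ p ∈ P3, p.card = 2 ∧ p ⊆ W)
    (ne2 : P2.Nonempty)
    (c12 : ∀ p ∈ P1, ∀ q ∈ P2, (p ∩ q).Nonempty)
    (c13 : ∀ p ∈ P1, ∀ q ∈ P3, (p ∩ q).Nonempty)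
    (c23 : ∀ p ∈ P2, ∀ q ∈ P3, (p ∩ q).Nonempty)
    (int1 : ∀ p ∈ P1, ∀ p' ∈ P1, (p ∩ p').Nonempty)
    (hZ1 : ∀ z ∈ Z1, ∀ p ∈ P1, z ∈ p) (hZ2 : ∀ z ∈ Z2, ∀ p ∈ P2, z ∈ p)
    (hZ3 : ∀ z ∈ Z3, ∀ p ∈ P3, z ∈ p)
    (hm : 4 ≤ W.card)
    (he1 : ({w,s} : Finset ℕ) ∈ P3) (he2 : ({w,t} : Finset ℕ) ∈ P3)
    (hstP1 : ({s,t} : Finset ℕ) ∈ P1)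
    (hP3star : ∀ r ∈ P3, w ∈ r) :
    P1.card + P2.card + P3.card + Z1.card + Z2.card + Z3.card ≤ 3 * W.card := by
  have hP3b : P3.card ≤ 2 := by
    apply card_le_two (q1 := ({w,s} : Finset ℕ)) (q2 := ({w,t} : Finset ℕ))
    intro r hr
    obtain ⟨z, hz, hre⟩ := pair_mem_decomp (hF3 r hr).1 (hP3star r hr)
    have hmeet := c13 _ hstP1 r hr
    rw [hre] at hmeet
    obtain ⟨α, hα1, hα2⟩ := inter_witness hmeet
    simp only [Finset.mem_insert, Finset.mem_singleton] at hα1 hα2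
    simp only [Finset.mem_insert, Finset.mem_singleton]
    -- hα1 : α = s ∨ α = t ; hα2 : α = w ∨ α = z
    rcases hα1 with h1 | h1 <;> rcases hα2 with h2 | h2
    · exact absurd (h1 ▸ h2 : s = w).symm hws
    · left; rw [hre, ← h2, h1]
    · exact absurd (h1 ▸ h2 : t = w).symm hwt
    · right; rw [hre, ← h2, h1]
  have hP1b : P1.card ≤ 3 := by
    apply card_le_three (q1 := ({w,s} : Finset ℕ)) (q2 := ({w,t} : Finset ℕ))
      (q3 := ({s,t} : Finset ℕ))
    intro r hr
    have m1 := c13 r hr _ he1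
    have m2 := c13 r hr _ he2
    rcases meet_two hst (hF1 r hr).1 m1 m2 with hwr | hre
    · obtain ⟨z, hz, hre⟩ := pair_mem_decomp (hF1 r hr).1 hwr
      have hmeet := int1 r hr _ hstP1
      rw [hre] at hmeet
      obtain ⟨α, hα1, hα2⟩ := inter_witness hmeet
      simp only [Finset.mem_insert, Finset.mem_singleton] at hα1 hα2
      simp only [Finset.mem_insert, Finset.mem_singleton]
      -- hα1 : α = w ∨ α = z ; hα2 : α = s ∨ α = t
      rcases hα1 with h1 | h1 <;> rcases hα2 with h2 | h2
      · exact absurd (h1 ▸ h2 : w = s) hws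
      · exact absurd (h1 ▸ h2 : w = t) hwt
      · left; rw [hre, ← h1, h2]
      · right; left; rw [hre, ← h1, h2]
    · simp [hre]
  have hP2b : P2.card ≤ 3 := by
    apply card_le_three (q1 := ({w,s} : Finset ℕ)) (q2 := ({w,t} : Finset ℕ))
      (q3 := ({s,t} : Finset ℕ))
    intro q hq
    have m1 := c23 q hq _ he1
    have m2 := c23 q hq _ he2
    rcases meet_two hst (hF2 q hq).1 m1 m2 with hwq | hqe
    · obtain ⟨z, hz, hqe⟩ := pair_mem_decomp (hF2 q hq).1 hwq
      have hmeet := c12 _ hstP1 q hq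
      rw [hqe, Finset.inter_comm] at hmeet
      obtain ⟨α, hα1, hα2⟩ := inter_witness hmeet
      simp only [Finset.mem_insert, Finset.mem_singleton] at hα1 hα2
      simp only [Finset.mem_insert, Finset.mem_singleton]
      -- hα1 : α = w ∨ α = z ; hα2 : α = s ∨ α = t
      rcases hα1 with h1 | h1 <;> rcases hα2 with h2 | h2
      · exact absurd (h1 ▸ h2 : w = s) hws
      · exact absurd (h1 ▸ h2 : w = t) hwt
      · left; rw [hqe, ← h1, h2]
      · right; left; rw [hqe, ← h1, h2]
    · simp [hqe]
  have hZ3b : Z3.card ≤ 1 :=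
    Z_le_one he1 he2 (hF3 _ he1).1 (hF3 _ he2).1 (pair_ne_pair hws hst) hZ3
  have hZ1b : Z1.card ≤ 2 := Z_le_two hstP1 (hF1 _ hstP1).1 hZ1
  obtain ⟨q2, hq2⟩ := ne2
  have hZ2b : Z2.card ≤ 2 := Z_le_two hq2 (hF2 q2 hq2).1 hZ2
  rcases Z_le_one_or hF1 hZ1 with h1 | h1 <;> rcases Z_le_one_or hF2 hZ2 with h2 | h2 <;> omega

lemma helperT
    (hF1 : ∀ p ∈ P1, p.card = 2 ∧ p ⊆ W) (hF2 : ∀ p ∈ P2, p.card = 2 ∧ p ⊆ W)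
    (hF3 : ∀ p ∈ P3, p.card = 2 ∧ p ⊆ W)
    (ne1 : P1.Nonempty) (ne2 : P2.Nonempty)
    (c12 : ∀ p ∈ P1, ∀ q ∈ P2, (p ∩ q).Nonempty)
    (c13 : ∀ p ∈ P1, ∀ q ∈ P3, (p ∩ q).Nonempty)
    (c23 : ∀ p ∈ P2, ∀ q ∈ P3, (p ∩ q).Nonempty)
    (int1 : ∀ p ∈ P1, ∀ p' ∈ P1, (p ∩ p').Nonempty)
    (int2 : ∀ p ∈ P2, ∀ p' ∈ P2, (p ∩ p').Nonempty)
    (int3 : ∀ p ∈ P3, ∀ p' ∈ P3, (p ∩ p').Nonempty)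
    (hZ1 : ∀ z ∈ Z1, ∀ p ∈ P1, z ∈ p) (hZ2 : ∀ z ∈ Z2, ∀ p ∈ P2, z ∈ p)
    (hZ3 : ∀ z ∈ Z3, ∀ p ∈ P3, z ∈ p)
    (hm : 4 ≤ W.card) (h2P3 : 2 ≤ P3.card) :
    P1.card + P2.card + P3.card + Z1.card + Z2.card + Z3.card ≤ 3 * W.card := by
  obtain ⟨e1, he1, e2, he2, he12⟩ := Finset.one_lt_card.mp h2P3
  obtain ⟨w, s, t, hws, hwt, hst, he1d, he2d⟩ :=
    pair_share (hF3 e1 he1).1 (hF3 e2 he2).1 he12 (int3 e1 he1 e2 he2)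
  rw [he1d] at he1; rw [he2d] at he2
  by_cases hT : ({s,t} : Finset ℕ) ∈ P3
  · -- triangle case: all three families inside the triangle {w,s,t}
    have tri : ∀ (P : Finset (Finset ℕ)), (∀ p ∈ P, p.card = 2 ∧ p ⊆ W) →
        (∀ p ∈ P, ∀ q ∈ P3, (p ∩ q).Nonempty) →
        P.card ≤ 3 := by
      intro P hF cP
      apply card_le_three (q1 := ({w,s} : Finset ℕ)) (q2 := ({w,t} : Finset ℕ))
        (q3 := ({s,t} : Finset ℕ))
      intro r hr
      have m1 := cP r hr _ he1
      have m2 := cP r hr _ he2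
      rcases meet_two hst (hF r hr).1 m1 m2 with hwr | hre
      · obtain ⟨z, hz, hre⟩ := pair_mem_decomp (hF r hr).1 hwr
        have hmeet := cP r hr _ hT
        rw [hre] at hmeet
        obtain ⟨α, hα1, hα2⟩ := inter_witness hmeet
        simp only [Finset.mem_insert, Finset.mem_singleton] at hα1 hα2
        simp only [Finset.mem_insert, Finset.mem_singleton]
        rcases hα1 with h1 | h1 <;> rcases hα2 with h2 | h2
        · exact absurd (h1 ▸ h2 : w = s) hws
        · exact absurd (h1 ▸ h2 : w = t) hwt
        · left; rw [hre, ← h1, h2]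
        · right; left; rw [hre, ← h1, h2]
      · simp [hre]
    have hP1b := tri P1 hF1 c13
    have hP2b := tri P2 hF2 c23
    have hP3b := tri P3 hF3 int3
    have hZ3b : Z3.card ≤ 1 :=
      Z_le_one he1 he2 (hF3 _ he1).1 (hF3 _ he2).1 (pair_ne_pair hws hst) hZ3
    obtain ⟨q1, hq1⟩ := ne1
    obtain ⟨q2, hq2⟩ := ne2
    have hZ1b : Z1.card ≤ 2 := Z_le_two hq1 (hF1 q1 hq1).1 hZ1
    have hZ2b : Z2.card ≤ 2 := Z_le_two hq2 (hF2 q2 hq2).1 hZ2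
    rcases Z_le_one_or hF1 hZ1 with h1 | h1 <;> rcases Z_le_one_or hF2 hZ2 with h2 | h2 <;>
      omega
  · -- star case
    have hP3star : ∀ r ∈ P3, w ∈ r := by
      intro r hr
      rcases meet_two hst (hF3 r hr).1 (int3 r hr _ he1) (int3 r hr _ he2) with h | h
      · exact h
      · exact absurd (h ▸ hr) hT
    by_cases hx1 : ∃ r ∈ P1, w ∉ r
    · obtain ⟨r, hr, hwr⟩ := hx1
      have hre : r = {s,t} :=
        (meet_two hst (hF1 r hr).1 (c13 r hr _ he1) (c13 r hr _ he2)).resolve_left hwr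
      exact tame_core hws hwt hst hF1 hF2 hF3 ne2 c12 c13 c23 int1 hZ1 hZ2 hZ3 hm
        he1 he2 (hre ▸ hr) hP3star
    by_cases hx2 : ∃ q ∈ P2, w ∉ q
    · obtain ⟨q, hq, hwq⟩ := hx2
      have hqe : q = {s,t} :=
        (meet_two hst (hF2 q hq).1 (c23 q hq _ he1) (c23 q hq _ he2)).resolve_left hwq
      have := tame_core hws hwt hst hF2 hF1 hF3 ne1
        (fun q' hq' p hp => by rw [Finset.inter_comm]; exact c12 p hp q' hq')
        c23 c13 int2 hZ2 hZ1 hZ3 hm he1 he2 (hqe ▸ hq) hP3star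
      omega
    · push_neg at hx1
      push_neg at hx2
      have hm3 : 3 ≤ W.card := by omega
      have b1 := PZ_star hF1 ne1 hx1 hZ1 hm3
      have b2 := PZ_star hF2 ne2 hx2 hZ2 hm3
      have b3 := PZ_star hF3 ⟨_, he1⟩ hP3star hZ3 hm3
      omega

lemma three_families
    (hF1 : ∀ p ∈ P1, p.card = 2 ∧ p ⊆ W) (hF2 : ∀ p ∈ P2, p.card = 2 ∧ p ⊆ W)
    (hF3 : ∀ p ∈ P3, p.card = 2 ∧ p ⊆ W)
    (ne1 : P1.Nonempty) (ne2 : P2.Nonempty) (ne3 : P3.Nonempty)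
    (c12 : ∀ p ∈ P1, ∀ q ∈ P2, (p ∩ q).Nonempty)
    (c13 : ∀ p ∈ P1, ∀ q ∈ P3, (p ∩ q).Nonempty)
    (c23 : ∀ p ∈ P2, ∀ q ∈ P3, (p ∩ q).Nonempty)
    (hZ1 : ∀ z ∈ Z1, ∀ p ∈ P1, z ∈ p) (hZ2 : ∀ z ∈ Z2, ∀ p ∈ P2, z ∈ p)
    (hZ3 : ∀ z ∈ Z3, ∀ p ∈ P3, z ∈ p)
    (hm : 4 ≤ W.card) :
    P1.card + P2.card + P3.card + Z1.card + Z2.card + Z3.card ≤ 3 * W.card := by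
  have f12 : ∀ q ∈ P2, ∀ p ∈ P1, (q ∩ p).Nonempty := fun q hq p hp => by
    rw [Finset.inter_comm]; exact c12 p hp q hq
  have f13 : ∀ q ∈ P3, ∀ p ∈ P1, (q ∩ p).Nonempty := fun q hq p hp => by
    rw [Finset.inter_comm]; exact c13 p hp q hq
  have f23 : ∀ q ∈ P3, ∀ p ∈ P2, (q ∩ p).Nonempty := fun q hq p hp => by
    rw [Finset.inter_comm]; exact c23 p hp q hq
  by_cases w3 : ∃ p ∈ P3, ∃ p' ∈ P3, p ∩ p' = ∅
  · exact helperW hF1 hF2 hF3 ne1 ne2 c12 c13 c23 hZ1 hZ2 hZ3 hm w3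
  by_cases w1 : ∃ p ∈ P1, ∃ p' ∈ P1, p ∩ p' = ∅
  · have := helperW hF2 hF3 hF1 ne2 ne3 c23 f12 f13 hZ2 hZ3 hZ1 hm w1
    omega
  by_cases w2 : ∃ p ∈ P2, ∃ p' ∈ P2, p ∩ p' = ∅
  · have := helperW hF1 hF3 hF2 ne1 ne3 c13 c12 f23 hZ1 hZ3 hZ2 hm w2
    omega
  push_neg at w1 w2 w3
  have int1 : ∀ p ∈ P1, ∀ p' ∈ P1, (p ∩ p').Nonempty := fun p hp p' hp' =>
    (w1 p hp p' hp')
  have int2 : ∀ p ∈ P2, ∀ p' ∈ P2, (p ∩ p').Nonempty := fun p hp p' hp' =>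
    (w2 p hp p' hp')
  have int3 : ∀ p ∈ P3, ∀ p' ∈ P3, (p ∩ p').Nonempty := fun p hp p' hp' =>
    (w3 p hp p' hp')
  rcases Nat.lt_or_ge P3.card 2 with h3 | h3
  · rcases Nat.lt_or_ge P1.card 2 with h1 | h1
    · rcases Nat.lt_or_ge P2.card 2 with h2 | h2
      · -- all singletons
        obtain ⟨q1, hq1⟩ := ne1
        obtain ⟨q2, hq2⟩ := ne2
        obtain ⟨q3, hq3⟩ := ne3
        have hZ1b : Z1.card ≤ 2 := Z_le_two hq1 (hF1 q1 hq1).1 hZ1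
        have hZ2b : Z2.card ≤ 2 := Z_le_two hq2 (hF2 q2 hq2).1 hZ2
        have hZ3b : Z3.card ≤ 2 := Z_le_two hq3 (hF3 q3 hq3).1 hZ3
        omega
      · have := helperT hF1 hF3 hF2 ne1 ne3 c13 c12 f23 int1 int3 int2
          hZ1 hZ3 hZ2 hm h2
        omega
    · have := helperT hF2 hF3 hF1 ne2 ne3 c23 f12 f13 int2 int3 int1
        hZ2 hZ3 hZ1 hm h1
      omega
  · exact helperT hF1 hF2 hF3 ne1 ne2 c12 c13 c23 int1 int2 int3 hZ1 hZ2 hZ3 hm h3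

end ThreeFamilies3


section Classify

lemma filter_split (s : Finset (Finset ℕ)) (p q : Finset ℕ → Prop)
    [DecidablePred p] [DecidablePred q] :
    (s.filter p).card = (s.filter (fun e => p e ∧ q e)).card +
      (s.filter (fun e => p e ∧ ¬ q e)).card := by
  rw [← Finset.filter_filter, ← Finset.filter_filter]
  exact (Finset.card_filter_add_card_filter_not _).symm

lemma triple_eq {e : Finset ℕ} {a b c : ℕ} (h3 : e.card = 3) (ha : a ∈ e) (hb : b ∈ e)
    (hc : c ∈ e) (hab : a ≠ b) (hac : a ≠ c) (hbc : b ≠ c) : e = {a, b, c} := by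
  obtain ⟨z, hza, hzb, hze⟩ := third_decomp h3 ha hb hab
  have hcz : c = z := by
    have h0 : c ∈ ({a, b, z} : Finset ℕ) := hze ▸ hc
    simp only [Finset.mem_insert, Finset.mem_singleton] at h0
    rcases h0 with h | h | h
    · exact absurd h.symm hac
    · exact absurd h.symm hbc
    · exact h
  rw [hze, hcz]

noncomputable def zof (a b : ℕ) (e : Finset ℕ) : ℕ := ((e.erase a).erase b).sum id

lemma zof_spec {e : Finset ℕ} {a b : ℕ} (h3 : e.card = 3) (ha : a ∈ e) (hb : b ∈ e)
    (hab : a ≠ b) : e = {a, b, zof a b e} ∧ zof a b e ≠ a ∧ zof a b e ≠ b := by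
  obtain ⟨z, hza, hzb, hze⟩ := third_decomp h3 ha hb hab
  have hz : zof a b e = z := by
    rw [zof, hze]
    rw [Finset.erase_insert (by
      simp only [Finset.mem_insert, Finset.mem_singleton]
      push_neg
      exact ⟨hab, fun h => hza h.symm⟩)]
    rw [Finset.erase_insert (by
      simp only [Finset.mem_singleton]
      exact fun h => hzb h.symm)]
    simp
  rw [hz]
  exact ⟨hze, hza, hzb⟩

variable {V : Finset ℕ} {𝒜 : Finset (Finset ℕ)}

lemma two_cover (h3 : ∀ e ∈ 𝒜, e ⊆ V ∧ e.card = 3)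
    (hint : ∀ e ∈ 𝒜, ∀ f ∈ 𝒜, (e ∩ f).Nonempty)
    {x y : ℕ} (hxy : x ≠ y)
    (hcov : ∀ e ∈ 𝒜, x ∈ e ∨ y ∈ e)
    (hex : ∃ e ∈ 𝒜, x ∉ e) (hey : ∃ e ∈ 𝒜, y ∉ e)
    (hn : 7 ≤ V.card) : 𝒜.card ≤ 3 * V.card - 8 := by
  classical
  obtain ⟨ex, hexA, hexx⟩ := hex
  obtain ⟨ey, heyA, heyy⟩ := hey
  have hyV : y ∈ V := (h3 ex hexA).1 ((hcov ex hexA).resolve_left hexx)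
  have hxV : x ∈ V := (h3 ey heyA).1 ((hcov ey heyA).resolve_right heyy)
  set W := (V.erase x).erase y with hW
  have hWcard : W.card = V.card - 2 := by
    rw [hW, Finset.card_erase_of_mem (Finset.mem_erase.mpr ⟨fun h => hxy h.symm, hyV⟩),
      Finset.card_erase_of_mem hxV]
    omega
  -- partition
  have hsplit0 : (𝒜.filter (fun e => x ∈ e)).card + (𝒜.filter (fun e => ¬ x ∈ e)).card
      = 𝒜.card := Finset.card_filter_add_card_filter_not _
  have hsplit1 := filter_split 𝒜 (fun e => x ∈ e) (fun e => y ∈ e)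
  set Axy := 𝒜.filter (fun e => x ∈ e ∧ y ∈ e) with hAxy
  set Ax := 𝒜.filter (fun e => x ∈ e ∧ ¬ y ∈ e) with hAx
  set Ay := 𝒜.filter (fun e => ¬ x ∈ e) with hAy
  have hAymem : ∀ e ∈ Ay, y ∈ e ∧ x ∉ e := by
    intro e he
    have he' := Finset.mem_filter.mp he
    exact ⟨(hcov e he'.1).resolve_left he'.2, he'.2⟩
  -- |Axy| ≤ |W|
  have hAxyb : Axy.card ≤ W.card := by
    have hsub : Axy ⊆ W.image (fun z => ({x, y, z} : Finset ℕ)) := by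
      intro e he
      have he' := Finset.mem_filter.mp he
      obtain ⟨z, hza, hzb, hze⟩ := third_decomp (h3 e he'.1).2 he'.2.1 he'.2.2 hxy
      refine Finset.mem_image.mpr ⟨z, ?_, hze.symm⟩
      rw [hW]
      refine Finset.mem_erase.mpr ⟨hzb, Finset.mem_erase.mpr ⟨hza, (h3 e he'.1).1 ?_⟩⟩
      rw [hze]; simp
    calc Axy.card ≤ _ := Finset.card_le_card hsub
      _ ≤ W.card := Finset.card_image_le
  -- pair families
  set P := Ax.image (fun e => e.erase x) with hPdef
  set Q := Ay.image (fun e => e.erase y) with hQdef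
  have hPcard : P.card = Ax.card := by
    apply Finset.card_image_of_injOn
    intro e he f hf hef
    have hxe : x ∈ e := (Finset.mem_filter.mp he).2.1
    have hxf : x ∈ f := (Finset.mem_filter.mp hf).2.1
    rw [← Finset.insert_erase hxe, ← Finset.insert_erase hxf]
    exact congrArg _ hef
  have hQcard : Q.card = Ay.card := by
    apply Finset.card_image_of_injOn
    intro e he f hf hef
    have hxe : y ∈ e := (hAymem e he).1
    have hxf : y ∈ f := (hAymem f hf).1
    rw [← Finset.insert_erase hxe, ← Finset.insert_erase hxf]
    exact congrArg _ hef
  have hP : ∀ p ∈ P, p.card = 2 ∧ p ⊆ W := by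
    intro p hp
    obtain ⟨e, he, rfl⟩ := Finset.mem_image.mp hp
    have he' := Finset.mem_filter.mp he
    constructor
    · rw [Finset.card_erase_of_mem he'.2.1, (h3 e he'.1).2]
    · intro z hz
      have hz' := Finset.mem_erase.mp hz
      rw [hW]
      refine Finset.mem_erase.mpr ⟨?_, Finset.mem_erase.mpr ⟨hz'.1, (h3 e he'.1).1 hz'.2⟩⟩
      rintro rfl; exact he'.2.2 hz'.2
  have hQ : ∀ q ∈ Q, q.card = 2 ∧ q ⊆ W := by
    intro q hq
    obtain ⟨e, he, rfl⟩ := Finset.mem_image.mp hq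
    obtain ⟨hye, hxe⟩ := hAymem e he
    have heA := (Finset.mem_filter.mp he).1
    constructor
    · rw [Finset.card_erase_of_mem hye, (h3 e heA).2]
    · intro z hz
      have hz' := Finset.mem_erase.mp hz
      rw [hW]
      refine Finset.mem_erase.mpr ⟨hz'.1, Finset.mem_erase.mpr ⟨?_, (h3 e heA).1 hz'.2⟩⟩
      rintro rfl; exact hxe hz'.2
  have hPne : P.Nonempty := by
    refine ⟨ey.erase x, Finset.mem_image.mpr ⟨ey, ?_, rfl⟩⟩
    exact Finset.mem_filter.mpr ⟨heyA, (hcov ey heyA).resolve_right heyy, heyy⟩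
  have hQne : Q.Nonempty := by
    refine ⟨ex.erase y, Finset.mem_image.mpr ⟨ex, ?_, rfl⟩⟩
    exact Finset.mem_filter.mpr ⟨hexA, hexx⟩
  have hcross : ∀ p ∈ P, ∀ q ∈ Q, (p ∩ q).Nonempty := by
    intro p hp q hq
    obtain ⟨e, he, rfl⟩ := Finset.mem_image.mp hp
    obtain ⟨f, hf, rfl⟩ := Finset.mem_image.mp hq
    have he' := Finset.mem_filter.mp he
    obtain ⟨hyf, hxf⟩ := hAymem f hf
    have hfA := (Finset.mem_filter.mp hf).1
    obtain ⟨z, hz1, hz2⟩ := inter_witness (hint e he'.1 f hfA)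
    refine ⟨z, Finset.mem_inter.mpr ⟨Finset.mem_erase.mpr ⟨?_, hz1⟩,
      Finset.mem_erase.mpr ⟨?_, hz2⟩⟩⟩
    · rintro rfl; exact hxf hz2
    · rintro rfl; exact he'.2.2 hz1
  have hm : 5 ≤ W.card := by omega
  have hkey := two_families hP hQ hPne hQne hcross hm
  omega

end Classify


section NoCover
variable {V : Finset ℕ} {𝒜 : Finset (Finset ℕ)}

lemma no_cover (h3 : ∀ e ∈ 𝒜, e ⊆ V ∧ e.card = 3)
    (hint : ∀ e ∈ 𝒜, ∀ f ∈ 𝒜, (e ∩ f).Nonempty)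
    {a b c : ℕ} (hab : a ≠ b) (hac : a ≠ c) (hbc : b ≠ c)
    (haV : a ∈ V) (hbV : b ∈ V) (hcV : c ∈ V)
    (hmeets : ∀ e ∈ 𝒜, a ∈ e ∨ b ∈ e ∨ c ∈ e)
    (hea : ∃ e ∈ 𝒜, a ∈ e ∧ b ∉ e ∧ c ∉ e)
    (heb : ∃ e ∈ 𝒜, b ∈ e ∧ a ∉ e ∧ c ∉ e)
    (hec : ∃ e ∈ 𝒜, c ∈ e ∧ a ∉ e ∧ b ∉ e)
    (hn : 7 ≤ V.card) : 𝒜.card ≤ 3 * V.card - 8 := by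
  classical
  set W := ((V.erase a).erase b).erase c with hW
  have hbmem : b ∈ V.erase a := Finset.mem_erase.mpr ⟨fun h => hab h.symm, hbV⟩
  have hcmem : c ∈ (V.erase a).erase b :=
    Finset.mem_erase.mpr ⟨fun h => hbc h.symm, Finset.mem_erase.mpr ⟨fun h => hac h.symm, hcV⟩⟩
  have hWcard : W.card = V.card - 3 := by
    rw [hW, Finset.card_erase_of_mem hcmem, Finset.card_erase_of_mem hbmem,
      Finset.card_erase_of_mem haV]
    omega
  have hWmem : ∀ {z : ℕ}, z ∈ V → z ≠ a → z ≠ b → z ≠ c → z ∈ W := by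
    intro z hz h1 h2 h3'
    rw [hW]
    exact Finset.mem_erase.mpr ⟨h3', Finset.mem_erase.mpr ⟨h2, Finset.mem_erase.mpr ⟨h1, hz⟩⟩⟩
  -- splits
  have s0 : (𝒜.filter (fun e => a ∈ e)).card + (𝒜.filter (fun e => ¬ a ∈ e)).card
      = 𝒜.card := Finset.card_filter_add_card_filter_not _
  have s1 := filter_split 𝒜 (fun e => a ∈ e) (fun e => b ∈ e)
  have s2 := filter_split 𝒜 (fun e => a ∈ e ∧ b ∈ e) (fun e => c ∈ e)
  have s3 := filter_split 𝒜 (fun e => a ∈ e ∧ ¬ b ∈ e) (fun e => c ∈ e)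
  have s4 := filter_split 𝒜 (fun e => ¬ a ∈ e) (fun e => b ∈ e)
  have s5 := filter_split 𝒜 (fun e => ¬ a ∈ e ∧ b ∈ e) (fun e => c ∈ e)
  have s6 := filter_split 𝒜 (fun e => ¬ a ∈ e ∧ ¬ b ∈ e) (fun e => c ∈ e)
  set CABC := 𝒜.filter (fun e => (a ∈ e ∧ b ∈ e) ∧ c ∈ e) with hCABC
  set Cab := 𝒜.filter (fun e => (a ∈ e ∧ b ∈ e) ∧ ¬ c ∈ e) with hCab
  set Cac := 𝒜.filter (fun e => (a ∈ e ∧ ¬ b ∈ e) ∧ c ∈ e) with hCac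
  set PaC := 𝒜.filter (fun e => (a ∈ e ∧ ¬ b ∈ e) ∧ ¬ c ∈ e) with hPaC
  set Cbc := 𝒜.filter (fun e => (¬ a ∈ e ∧ b ∈ e) ∧ c ∈ e) with hCbc
  set PbC := 𝒜.filter (fun e => (¬ a ∈ e ∧ b ∈ e) ∧ ¬ c ∈ e) with hPbC
  set PcC := 𝒜.filter (fun e => (¬ a ∈ e ∧ ¬ b ∈ e) ∧ c ∈ e) with hPcC
  have hnone : (𝒜.filter (fun e => (¬ a ∈ e ∧ ¬ b ∈ e) ∧ ¬ c ∈ e)).card = 0 := by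
    rw [Finset.card_eq_zero, Finset.eq_empty_iff_forall_notMem]
    intro e he
    have he' := Finset.mem_filter.mp he
    rcases hmeets e he'.1 with h | h | h
    · exact he'.2.1.1 h
    · exact he'.2.1.2 h
    · exact he'.2.2 h
  -- |CABC| ≤ 1
  have hCABCb : CABC.card ≤ 1 := by
    apply Finset.card_le_one.mpr
    intro e he f hf
    have he' := Finset.mem_filter.mp he
    have hf' := Finset.mem_filter.mp hf
    rw [triple_eq (h3 e he'.1).2 he'.2.1.1 he'.2.1.2 he'.2.2 hab hac hbc,
      triple_eq (h3 f hf'.1).2 hf'.2.1.1 hf'.2.1.2 hf'.2.2 hab hac hbc]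
  -- pair families
  set Pa := PaC.image (fun e => e.erase a) with hPa
  set Pb := PbC.image (fun e => e.erase b) with hPb
  set Pc := PcC.image (fun e => e.erase c) with hPc
  have memPaC : ∀ e ∈ PaC, e ∈ 𝒜 ∧ a ∈ e ∧ b ∉ e ∧ c ∉ e := by
    intro e he
    have he' := Finset.mem_filter.mp he
    exact ⟨he'.1, he'.2.1.1, he'.2.1.2, he'.2.2⟩
  have memPbC : ∀ e ∈ PbC, e ∈ 𝒜 ∧ b ∈ e ∧ a ∉ e ∧ c ∉ e := by
    intro e he
    have he' := Finset.mem_filter.mp he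
    exact ⟨he'.1, he'.2.1.2, he'.2.1.1, he'.2.2⟩
  have memPcC : ∀ e ∈ PcC, e ∈ 𝒜 ∧ c ∈ e ∧ a ∉ e ∧ b ∉ e := by
    intro e he
    have he' := Finset.mem_filter.mp he
    exact ⟨he'.1, he'.2.2, he'.2.1.1, he'.2.1.2⟩
  have cardPa : Pa.card = PaC.card := by
    apply Finset.card_image_of_injOn
    intro e he f hf hef
    rw [← Finset.insert_erase (memPaC e he).2.1, ← Finset.insert_erase (memPaC f hf).2.1]
    exact congrArg _ hef
  have cardPb : Pb.card = PbC.card := by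
    apply Finset.card_image_of_injOn
    intro e he f hf hef
    rw [← Finset.insert_erase (memPbC e he).2.1, ← Finset.insert_erase (memPbC f hf).2.1]
    exact congrArg _ hef
  have cardPc : Pc.card = PcC.card := by
    apply Finset.card_image_of_injOn
    intro e he f hf hef
    rw [← Finset.insert_erase (memPcC e he).2.1, ← Finset.insert_erase (memPcC f hf).2.1]
    exact congrArg _ hef
  have hFa : ∀ p ∈ Pa, p.card = 2 ∧ p ⊆ W := by
    intro p hp
    obtain ⟨e, he, rfl⟩ := Finset.mem_image.mp hp
    obtain ⟨heA, hae, hbe, hce⟩ := memPaC e he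
    refine ⟨by rw [Finset.card_erase_of_mem hae, (h3 e heA).2], ?_⟩
    intro z hz
    have hz' := Finset.mem_erase.mp hz
    refine hWmem ((h3 e heA).1 hz'.2) hz'.1 ?_ ?_
    · rintro rfl; exact hbe hz'.2
    · rintro rfl; exact hce hz'.2
  have hFb : ∀ p ∈ Pb, p.card = 2 ∧ p ⊆ W := by
    intro p hp
    obtain ⟨e, he, rfl⟩ := Finset.mem_image.mp hp
    obtain ⟨heA, hbe, hae, hce⟩ := memPbC e he
    refine ⟨by rw [Finset.card_erase_of_mem hbe, (h3 e heA).2], ?_⟩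
    intro z hz
    have hz' := Finset.mem_erase.mp hz
    refine hWmem ((h3 e heA).1 hz'.2) ?_ hz'.1 ?_
    · rintro rfl; exact hae hz'.2
    · rintro rfl; exact hce hz'.2
  have hFc : ∀ p ∈ Pc, p.card = 2 ∧ p ⊆ W := by
    intro p hp
    obtain ⟨e, he, rfl⟩ := Finset.mem_image.mp hp
    obtain ⟨heA, hce, hae, hbe⟩ := memPcC e he
    refine ⟨by rw [Finset.card_erase_of_mem hce, (h3 e heA).2], ?_⟩
    intro z hz
    have hz' := Finset.mem_erase.mp hz
    refine hWmem ((h3 e heA).1 hz'.2) ?_ ?_ hz'.1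
    · rintro rfl; exact hae hz'.2
    · rintro rfl; exact hbe hz'.2
  have nePa : Pa.Nonempty := by
    obtain ⟨e, he, h1, h2, h3'⟩ := hea
    exact ⟨e.erase a, Finset.mem_image.mpr ⟨e, Finset.mem_filter.mpr ⟨he, ⟨h1, h2⟩, h3'⟩, rfl⟩⟩
  have nePb : Pb.Nonempty := by
    obtain ⟨e, he, h1, h2, h3'⟩ := heb
    exact ⟨e.erase b, Finset.mem_image.mpr ⟨e, Finset.mem_filter.mpr ⟨he, ⟨h2, h1⟩, h3'⟩, rfl⟩⟩
  have nePc : Pc.Nonempty := by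
    obtain ⟨e, he, h1, h2, h3'⟩ := hec
    exact ⟨e.erase c, Finset.mem_image.mpr ⟨e, Finset.mem_filter.mpr ⟨he, ⟨h2, h3'⟩, h1⟩, rfl⟩⟩
  -- cross-intersections
  have crossgen : ∀ (u v : ℕ) (e f : Finset ℕ), e ∈ 𝒜 → f ∈ 𝒜 → u ∉ f → v ∉ e →
      (e.erase u ∩ f.erase v).Nonempty := by
    intro u v e f he hf huf hve
    obtain ⟨z, hz1, hz2⟩ := inter_witness (hint e he f hf)
    refine ⟨z, Finset.mem_inter.mpr ⟨Finset.mem_erase.mpr ⟨?_, hz1⟩,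
      Finset.mem_erase.mpr ⟨?_, hz2⟩⟩⟩
    · rintro rfl; exact huf hz2
    · rintro rfl; exact hve hz1
  have cab : ∀ p ∈ Pa, ∀ q ∈ Pb, (p ∩ q).Nonempty := by
    intro p hp q hq
    obtain ⟨e, he, rfl⟩ := Finset.mem_image.mp hp
    obtain ⟨f, hf, rfl⟩ := Finset.mem_image.mp hq
    exact crossgen a b e f (memPaC e he).1 (memPbC f hf).1 (memPbC f hf).2.2.1
      (memPaC e he).2.2.1
  have cac : ∀ p ∈ Pa, ∀ q ∈ Pc, (p ∩ q).Nonempty := by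
    intro p hp q hq
    obtain ⟨e, he, rfl⟩ := Finset.mem_image.mp hp
    obtain ⟨f, hf, rfl⟩ := Finset.mem_image.mp hq
    exact crossgen a c e f (memPaC e he).1 (memPcC f hf).1 (memPcC f hf).2.2.1
      (memPaC e he).2.2.2
  have cbc : ∀ p ∈ Pb, ∀ q ∈ Pc, (p ∩ q).Nonempty := by
    intro p hp q hq
    obtain ⟨e, he, rfl⟩ := Finset.mem_image.mp hp
    obtain ⟨f, hf, rfl⟩ := Finset.mem_image.mp hq
    exact crossgen b c e f (memPbC e he).1 (memPcC f hf).1 (memPcC f hf).2.2.2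
      (memPbC e he).2.2.2
  -- Z families
  set Zab := Cab.image (zof a b) with hZab
  set Zac := Cac.image (zof a c) with hZac
  set Zbc := Cbc.image (zof b c) with hZbc
  have memCab : ∀ e ∈ Cab, e ∈ 𝒜 ∧ a ∈ e ∧ b ∈ e ∧ c ∉ e := by
    intro e he
    have he' := Finset.mem_filter.mp he
    exact ⟨he'.1, he'.2.1.1, he'.2.1.2, he'.2.2⟩
  have memCac : ∀ e ∈ Cac, e ∈ 𝒜 ∧ a ∈ e ∧ c ∈ e ∧ b ∉ e := by
    intro e he
    have he' := Finset.mem_filter.mp he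
    exact ⟨he'.1, he'.2.1.1, he'.2.2, he'.2.1.2⟩
  have memCbc : ∀ e ∈ Cbc, e ∈ 𝒜 ∧ b ∈ e ∧ c ∈ e ∧ a ∉ e := by
    intro e he
    have he' := Finset.mem_filter.mp he
    exact ⟨he'.1, he'.2.1.2, he'.2.2, he'.2.1.1⟩
  have cardZab : Zab.card = Cab.card := by
    apply Finset.card_image_of_injOn
    intro e he f hf hef
    obtain ⟨he1, he2, _⟩ := zof_spec (h3 e (memCab e he).1).2 (memCab e he).2.1
      (memCab e he).2.2.1 hab
    obtain ⟨hf1, hf2, _⟩ := zof_spec (h3 f (memCab f hf).1).2 (memCab f hf).2.1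
      (memCab f hf).2.2.1 hab
    rw [he1, hf1, hef]
  have cardZac : Zac.card = Cac.card := by
    apply Finset.card_image_of_injOn
    intro e he f hf hef
    obtain ⟨he1, _, _⟩ := zof_spec (h3 e (memCac e he).1).2 (memCac e he).2.1
      (memCac e he).2.2.1 hac
    obtain ⟨hf1, _, _⟩ := zof_spec (h3 f (memCac f hf).1).2 (memCac f hf).2.1
      (memCac f hf).2.2.1 hac
    rw [he1, hf1, hef]
  have cardZbc : Zbc.card = Cbc.card := by
    apply Finset.card_image_of_injOn
    intro e he f hf hef
    obtain ⟨he1, _, _⟩ := zof_spec (h3 e (memCbc e he).1).2 (memCbc e he).2.1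
      (memCbc e he).2.2.1 hbc
    obtain ⟨hf1, _, _⟩ := zof_spec (h3 f (memCbc f hf).1).2 (memCbc f hf).2.1
      (memCbc f hf).2.2.1 hbc
    rw [he1, hf1, hef]
  -- Z-membership conditions : Z_{uv} ⊆ every pair of P_w
  have Zcond : ∀ (u v w' : ℕ), u ≠ v →
      (∀ f ∈ 𝒜, u ∉ f → v ∉ f → w' ∈ f) →
      ∀ (e : Finset ℕ), e ∈ 𝒜 → u ∈ e → v ∈ e → w' ∉ e →
      ∀ (f : Finset ℕ), f ∈ 𝒜 → u ∉ f → v ∉ f →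
      zof u v e ∈ f.erase w' := by
    intro u v w' huv hwf e heA hue hve hwe f hfA huf hvf
    obtain ⟨he1, hz1, hz2⟩ := zof_spec (h3 e heA).2 hue hve huv
    obtain ⟨α, hα1, hα2⟩ := inter_witness (hint e heA f hfA)
    have hαz : α = zof u v e := by
      rw [he1] at hα1
      simp only [Finset.mem_insert, Finset.mem_singleton] at hα1
      rcases hα1 with rfl | rfl | rfl
      · exact absurd hα2 huf
      · exact absurd hα2 hvf
      · rfl
    refine Finset.mem_erase.mpr ⟨?_, hαz ▸ hα2⟩
    intro hzw
    apply hwe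
    rw [he1, hzw]
    simp
  have hZ3 : ∀ z ∈ Zab, ∀ p ∈ Pc, z ∈ p := by
    intro z hz p hp
    obtain ⟨e, he, rfl⟩ := Finset.mem_image.mp hz
    obtain ⟨f, hf, rfl⟩ := Finset.mem_image.mp hp
    obtain ⟨heA, h1, h2, h3'⟩ := memCab e he
    obtain ⟨hfA, hf1, hf2, hf3⟩ := memPcC f hf
    exact Zcond a b c hab (fun g hg hg1 hg2 => by
      rcases hmeets g hg with h | h | h
      · exact absurd h hg1
      · exact absurd h hg2
      · exact h) e heA h1 h2 h3' f hfA hf2 hf3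
  have hZ2 : ∀ z ∈ Zac, ∀ p ∈ Pb, z ∈ p := by
    intro z hz p hp
    obtain ⟨e, he, rfl⟩ := Finset.mem_image.mp hz
    obtain ⟨f, hf, rfl⟩ := Finset.mem_image.mp hp
    obtain ⟨heA, h1, h2, h3'⟩ := memCac e he
    obtain ⟨hfA, hf1, hf2, hf3⟩ := memPbC f hf
    exact Zcond a c b hac (fun g hg hg1 hg2 => by
      rcases hmeets g hg with h | h | h
      · exact absurd h hg1
      · exact h
      · exact absurd h hg2) e heA h1 h2 h3' f hfA hf2 hf3
  have hZ1 : ∀ z ∈ Zbc, ∀ p ∈ Pa, z ∈ p := by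
    intro z hz p hp
    obtain ⟨e, he, rfl⟩ := Finset.mem_image.mp hz
    obtain ⟨f, hf, rfl⟩ := Finset.mem_image.mp hp
    obtain ⟨heA, h1, h2, h3'⟩ := memCbc e he
    obtain ⟨hfA, hf1, hf2, hf3⟩ := memPaC f hf
    exact Zcond b c a hbc (fun g hg hg1 hg2 => by
      rcases hmeets g hg with h | h | h
      · exact h
      · exact absurd h hg1
      · exact absurd h hg2) e heA h1 h2 h3' f hfA hf2 hf3
  have hm : 4 ≤ W.card := by omega
  have hkey := three_families hFa hFb hFc nePa nePb nePc cab cac cbc hZ1 hZ2 hZ3 hm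
  omega

end NoCover


section Main
variable {V : Finset ℕ} {𝒜 : Finset (Finset ℕ)}

lemma star_or_small (h3 : ∀ e ∈ 𝒜, e ⊆ V ∧ e.card = 3)
    (hint : ∀ e ∈ 𝒜, ∀ f ∈ 𝒜, (e ∩ f).Nonempty)
    (hn : 7 ≤ V.card) :
    (∃ x, ∀ e ∈ 𝒜, x ∈ e) ∨ 𝒜.card ≤ 3 * V.card - 8 := by
  classical
  by_cases hstar : ∃ x, ∀ e ∈ 𝒜, x ∈ e
  · exact Or.inl hstar
  right
  push_neg at hstar
  rcases Finset.eq_empty_or_nonempty 𝒜 with rfl | ⟨A, hA⟩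
  · simp
  obtain ⟨a, b, c, hab, hac, hbc, hAe⟩ := Finset.card_eq_three.mp (h3 A hA).2
  have haA : a ∈ A := by rw [hAe]; simp
  have hbA : b ∈ A := by rw [hAe]; simp
  have hcA : c ∈ A := by rw [hAe]; simp
  have hmeets : ∀ e ∈ 𝒜, a ∈ e ∨ b ∈ e ∨ c ∈ e := by
    intro e he
    obtain ⟨z, hz1, hz2⟩ := inter_witness (hint e he A hA)
    rw [hAe] at hz2
    simp only [Finset.mem_insert, Finset.mem_singleton] at hz2
    rcases hz2 with rfl | rfl | rfl
    · exact Or.inl hz1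
    · exact Or.inr (Or.inl hz1)
    · exact Or.inr (Or.inr hz1)
  by_cases hcab : ∀ e ∈ 𝒜, a ∈ e ∨ b ∈ e
  · exact two_cover h3 hint hab hcab (hstar a) (hstar b) hn
  by_cases hcac : ∀ e ∈ 𝒜, a ∈ e ∨ c ∈ e
  · exact two_cover h3 hint hac hcac (hstar a) (hstar c) hn
  by_cases hcbc : ∀ e ∈ 𝒜, b ∈ e ∨ c ∈ e
  · exact two_cover h3 hint hbc hcbc (hstar b) (hstar c) hn
  push_neg at hcab hcac hcbc
  obtain ⟨ec, hecA, heca, hecb⟩ := hcab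
  obtain ⟨eb, hebA, heba, hebc⟩ := hcac
  obtain ⟨ea, heaA, heab, heac⟩ := hcbc
  have hea' : ∃ e ∈ 𝒜, a ∈ e ∧ b ∉ e ∧ c ∉ e := by
    refine ⟨ea, heaA, ?_, heab, heac⟩
    rcases hmeets ea heaA with h | h | h
    · exact h
    · exact absurd h heab
    · exact absurd h heac
  have heb' : ∃ e ∈ 𝒜, b ∈ e ∧ a ∉ e ∧ c ∉ e := by
    refine ⟨eb, hebA, ?_, heba, hebc⟩
    rcases hmeets eb hebA with h | h | h
    · exact absurd h heba
    · exact h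
    · exact absurd h hebc
  have hec' : ∃ e ∈ 𝒜, c ∈ e ∧ a ∉ e ∧ b ∉ e := by
    refine ⟨ec, hecA, ?_, heca, hecb⟩
    rcases hmeets ec hecA with h | h | h
    · exact absurd h heca
    · exact absurd h hecb
    · exact h
  exact no_cover h3 hint hab hac hbc ((h3 A hA).1 haA) ((h3 A hA).1 hbA) ((h3 A hA).1 hcA)
    hmeets hea' heb' hec' hn

/-- number of 3-subsets of V containing a fixed x ∈ V -/
lemma star_count {x : ℕ} (hx : x ∈ V) :
    ((V.powersetCard 3).filter (fun e => x ∈ e)).card = (V.card - 1).choose 2 := by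
  classical
  have himg : (V.powersetCard 3).filter (fun e => x ∈ e) =
      ((V.erase x).powersetCard 2).image (fun s => insert x s) := by
    ext e
    simp only [Finset.mem_filter, Finset.mem_powersetCard, Finset.mem_image]
    constructor
    · rintro ⟨⟨hsub, hcard⟩, hxe⟩
      refine ⟨e.erase x, ⟨?_, ?_⟩, Finset.insert_erase hxe⟩
      · intro z hz
        have hz' := Finset.mem_erase.mp hz
        exact Finset.mem_erase.mpr ⟨hz'.1, hsub hz'.2⟩
      · rw [Finset.card_erase_of_mem hxe, hcard]
    · rintro ⟨s, ⟨hsub, hcard⟩, rfl⟩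
      have hxs : x ∉ s := fun h => (Finset.mem_erase.mp (hsub h)).1 rfl
      refine ⟨⟨?_, ?_⟩, by simp⟩
      · intro z hz
        rcases Finset.mem_insert.mp hz with rfl | hz
        · exact hx
        · exact (Finset.mem_erase.mp (hsub hz)).2
      · rw [Finset.card_insert_of_notMem hxs, hcard]
  rw [himg]
  rw [Finset.card_image_of_injOn]
  · rw [Finset.card_powersetCard, Finset.card_erase_of_mem hx]
  · intro s hs t ht hst
    simp only [Finset.mem_coe, Finset.mem_powersetCard] at hs ht
    have hxs : x ∉ s := fun h => (Finset.mem_erase.mp (hs.1 h)).1 rfl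
    have hxt : x ∉ t := fun h => (Finset.mem_erase.mp (ht.1 h)).1 rfl
    rw [← Finset.erase_insert hxs, ← Finset.erase_insert hxt]
    exact congrArg (fun u : Finset ℕ => u.erase x) hst

lemma arith2 {n : ℕ} (hn : 7 ≤ n) : 3 * n - 6 ≤ (n - 1).choose 2 := by
  induction n, hn using Nat.le_induction with
  | base => decide
  | succ m hm ih =>
    have step : (m + 1 - 1).choose 2 = (m - 1).choose 1 + (m - 1).choose 2 := by
      have h1 : m + 1 - 1 = (m - 1) + 1 := by omega
      rw [h1, Nat.choose_succ_succ']
    have h1 : (m - 1).choose 1 = m - 1 := Nat.choose_one_right _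
    omega

/-- Erdős–Ko–Rado bound for 3-sets, n ≥ 6 -/
lemma ekr_bound (h3 : ∀ e ∈ 𝒜, e ⊆ V ∧ e.card = 3)
    (hint : ∀ e ∈ 𝒜, ∀ f ∈ 𝒜, (e ∩ f).Nonempty)
    (hn : 6 ≤ V.card) : 𝒜.card ≤ (V.card - 1).choose 2 := by
  classical
  rcases Nat.lt_or_ge V.card 7 with h7 | h7
  · -- V.card = 6 : complement pairing
    have h6 : V.card = 6 := by omega
    have hsub1 : 𝒜 ⊆ V.powersetCard 3 := by
      intro e he
      exact Finset.mem_powersetCard.mpr ⟨(h3 e he).1, (h3 e he).2⟩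
    have hsub2 : 𝒜.image (fun e => V \ e) ⊆ V.powersetCard 3 := by
      intro f hf
      obtain ⟨e, he, rfl⟩ := Finset.mem_image.mp hf
      refine Finset.mem_powersetCard.mpr ⟨Finset.sdiff_subset, ?_⟩
      rw [Finset.card_sdiff_of_subset (h3 e he).1, (h3 e he).2, h6]
    have hdisj : Disjoint 𝒜 (𝒜.image (fun e => V \ e)) := by
      rw [Finset.disjoint_right]
      intro f hf hfA
      obtain ⟨e, he, rfl⟩ := Finset.mem_image.mp hf
      obtain ⟨z, hz1, hz2⟩ := inter_witness (hint e he _ hfA)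
      exact (Finset.mem_sdiff.mp hz2).2 hz1
    have hinj : (𝒜.image (fun e => V \ e)).card = 𝒜.card := by
      apply Finset.card_image_of_injOn
      intro e he f hf hef
      have h1 : V \ (V \ e) = e := Finset.sdiff_sdiff_eq_self (h3 e he).1
      have h2 : V \ (V \ f) = f := Finset.sdiff_sdiff_eq_self (h3 f hf).1
      rw [← h1, ← h2]
      exact congrArg _ hef
    have hcup : (𝒜 ∪ 𝒜.image (fun e => V \ e)).card ≤ (V.powersetCard 3).card :=
      Finset.card_le_card (Finset.union_subset hsub1 hsub2)
    rw [Finset.card_union_of_disjoint hdisj, hinj, Finset.card_powersetCard, h6] at hcup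
    have h20 : (6 : ℕ).choose 3 = 20 := by decide
    rw [h6]
    have h10 : (6 - 1 : ℕ).choose 2 = 10 := by decide
    omega
  · rcases star_or_small h3 hint h7 with ⟨x, hx⟩ | hsmall
    · rcases Finset.eq_empty_or_nonempty 𝒜 with rfl | ⟨A, hA⟩
      · simp
      have hxV : x ∈ V := (h3 A hA).1 (hx A hA)
      have hsub : 𝒜 ⊆ (V.powersetCard 3).filter (fun e => x ∈ e) := by
        intro e he
        exact Finset.mem_filter.mpr
          ⟨Finset.mem_powersetCard.mpr ⟨(h3 e he).1, (h3 e he).2⟩, hx e he⟩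
      calc 𝒜.card ≤ _ := Finset.card_le_card hsub
        _ = (V.card - 1).choose 2 := star_count hxV
    · have := arith2 h7
      omega

/-- uniqueness: an intersecting family achieving the bound is a full star -/
lemma star_eq (h3 : ∀ e ∈ 𝒜, e ⊆ V ∧ e.card = 3)
    (hint : ∀ e ∈ 𝒜, ∀ f ∈ 𝒜, (e ∩ f).Nonempty)
    (hn : 7 ≤ V.card) (hcard : 𝒜.card = (V.card - 1).choose 2) :
    ∃ x ∈ V, 𝒜 = (V.powersetCard 3).filter (fun e => x ∈ e) := by
  classical
  have harith := arith2 hn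
  rcases star_or_small h3 hint hn with ⟨x, hx⟩ | hsmall
  · have hAne : 𝒜.Nonempty := by
      rw [← Finset.card_pos, hcard]
      omega
    obtain ⟨A, hA⟩ := hAne
    have hxV : x ∈ V := (h3 A hA).1 (hx A hA)
    refine ⟨x, hxV, ?_⟩
    have hsub : 𝒜 ⊆ (V.powersetCard 3).filter (fun e => x ∈ e) := by
      intro e he
      exact Finset.mem_filter.mpr
        ⟨Finset.mem_powersetCard.mpr ⟨(h3 e he).1, (h3 e he).2⟩, hx e he⟩
    apply Finset.eq_of_subset_of_card_le hsub
    rw [star_count hxV, hcard]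
  · omega

end Main


end EKR

namespace EKR
open ThreeGraph

lemma mk3_mem_edges {V : Finset ℕ} {p : Finset ℕ → Prop} {e : Finset ℕ} :
    e ∈ (mk3 V p).edges ↔ (e ⊆ V ∧ e.card = 3 ∧ p e) := by
  classical
  show e ∈ (V.powersetCard 3).filter p ↔ _
  rw [Finset.mem_filter, Finset.mem_powersetCard]
  tauto

lemma matchM_verts : matchM.verts = Finset.range 6 := rfl

lemma matchM_mem {e : Finset ℕ} :
    e ∈ matchM.edges ↔ (e = {0,1,2} ∨ e = {3,4,5}) := by
  rw [matchM, mk3_mem_edges]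
  constructor
  · tauto
  · rintro (rfl | rfl)
    · exact ⟨by decide, by decide, Or.inl rfl⟩
    · exact ⟨by decide, by decide, Or.inr rfl⟩

/-- no copy of M means the edge set is intersecting -/
lemma intersecting_of_noCopy (H : ThreeGraph) (h : ¬ HasCopy matchM H) :
    ∀ e ∈ H.edges, ∀ f ∈ H.edges, (e ∩ f).Nonempty := by
  intro e he f hf
  by_contra hcon
  have hdisj : e ∩ f = ∅ := Finset.not_nonempty_iff_eq_empty.mp hcon
  obtain ⟨x1, x2, x3, h12, h13, h23, hee⟩ := Finset.card_eq_three.mp (H.card3 e he)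
  obtain ⟨y1, y2, y3, g12, g13, g23, hfe⟩ := Finset.card_eq_three.mp (H.card3 f hf)
  have hxy : ∀ u ∈ e, ∀ v ∈ f, u ≠ v := by
    rintro u hu v hv rfl
    have : u ∈ e ∩ f := Finset.mem_inter.mpr ⟨hu, hv⟩
    rw [hdisj] at this
    exact absurd this (Finset.notMem_empty _)
  have hx1e : x1 ∈ e := by rw [hee]; simp
  have hx2e : x2 ∈ e := by rw [hee]; simp
  have hx3e : x3 ∈ e := by rw [hee]; simp
  have hy1f : y1 ∈ f := by rw [hfe]; simp
  have hy2f : y2 ∈ f := by rw [hfe]; simp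
  have hy3f : y3 ∈ f := by rw [hfe]; simp
  apply h
  set g : ℕ → ℕ := fun v => if v = 0 then x1 else if v = 1 then x2 else if v = 2 then x3
    else if v = 3 then y1 else if v = 4 then y2 else y3 with hg
  have hg0 : g 0 = x1 := rfl
  have hg1 : g 1 = x2 := rfl
  have hg2 : g 2 = x3 := rfl
  have hg3 : g 3 = y1 := rfl
  have hg4 : g 4 = y2 := rfl
  have hg5 : g 5 = y3 := rfl
  have hr6 : Finset.range 6 = ({0,1,2,3,4,5} : Finset ℕ) := by decide
  have himg : (Finset.range 6).image g = e ∪ f := by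
    rw [hr6]
    rw [show ({0,1,2,3,4,5} : Finset ℕ).image g = {g 0, g 1, g 2, g 3, g 4, g 5} by
      simp [Finset.image_insert]]
    rw [hg0, hg1, hg2, hg3, hg4, hg5, hee, hfe]
    ext z
    simp only [Finset.mem_insert, Finset.mem_singleton, Finset.mem_union]
    tauto
  have hinj : Set.InjOn g ↑(Finset.range 6) := by
    apply Finset.injOn_of_card_image_eq
    rw [himg, Finset.card_union_of_disjoint (Finset.disjoint_iff_inter_eq_empty.mpr hdisj),
      H.card3 e he, H.card3 f hf, Finset.card_range]
  refine ⟨g, ?_, ?_, ?_⟩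
  · rw [matchM_verts]; exact hinj
  · intro v hv
    rw [matchM_verts] at hv
    have : g v ∈ (Finset.range 6).image g := Finset.mem_image_of_mem g hv
    rw [himg] at this
    rcases Finset.mem_union.mp this with h' | h'
    · exact H.sub e he h'
    · exact H.sub f hf h'
  · intro e0 he0
    rcases matchM_mem.mp he0 with rfl | rfl
    · rw [show ({0,1,2} : Finset ℕ).image g = {g 0, g 1, g 2} by simp [Finset.image_insert]]
      rw [hg0, hg1, hg2, ← hee]
      exact he
    · rw [show ({3,4,5} : Finset ℕ).image g = {g 3, g 4, g 5} by simp [Finset.image_insert]]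
      rw [hg3, hg4, hg5, ← hfe]
      exact hf

lemma noCopy_of_intersecting (H : ThreeGraph)
    (hint : ∀ e ∈ H.edges, ∀ f ∈ H.edges, (e ∩ f).Nonempty) : ¬ HasCopy matchM H := by
  rintro ⟨g, hinj, hmap, hedge⟩
  have h1 : ({0,1,2} : Finset ℕ).image g ∈ H.edges := hedge _ (matchM_mem.mpr (Or.inl rfl))
  have h2 : ({3,4,5} : Finset ℕ).image g ∈ H.edges := hedge _ (matchM_mem.mpr (Or.inr rfl))
  obtain ⟨z, hz1, hz2⟩ := inter_witness (hint _ h1 _ h2)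
  obtain ⟨u, hu, hue⟩ := Finset.mem_image.mp hz1
  obtain ⟨v, hv, hve⟩ := Finset.mem_image.mp hz2
  have huv : g u = g v := by rw [hue, hve]
  simp only [Finset.mem_insert, Finset.mem_singleton] at hu hv
  have hur : u ∈ (matchM.verts : Set ℕ) := by
    rw [matchM_verts]
    simp only [Finset.coe_range, Set.mem_Iio]
    omega
  have hvr : v ∈ (matchM.verts : Set ℕ) := by
    rw [matchM_verts]
    simp only [Finset.coe_range, Set.mem_Iio]
    omega
  have := hinj hur hvr huv
  omega

lemma starS_edges (n : ℕ) :
    (starS n).edges = ((Finset.range n).powersetCard 3).filter (fun e => 0 ∈ e) := by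
  ext e
  rw [show (starS n).edges = (mk3 (Finset.range n) (fun e => 0 ∈ e)).edges from rfl,
    mk3_mem_edges, Finset.mem_filter, Finset.mem_powersetCard]
  tauto

lemma starS_card (n : ℕ) (hn : 1 ≤ n) : (starS n).edges.card = (n - 1).choose 2 := by
  rw [starS_edges, star_count (Finset.mem_range.mpr hn), Finset.card_range]

lemma starS_int (n : ℕ) : ∀ e ∈ (starS n).edges, ∀ f ∈ (starS n).edges, (e ∩ f).Nonempty := by
  intro e he f hf
  rw [starS_edges, Finset.mem_filter] at he hf
  exact ⟨0, Finset.mem_inter.mpr ⟨he.2, hf.2⟩⟩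

/-- main uniqueness construction -/
lemma iso_star (H : ThreeGraph) {n : ℕ} (hn : 7 ≤ n) (hV : H.verts.card = n)
    {x : ℕ} (hxV : x ∈ H.verts)
    (hAeq : H.edges = (H.verts.powersetCard 3).filter (fun e => x ∈ e)) :
    Iso H (starS n) := by
  classical
  have hcard1 : Fintype.card ↥(H.verts.erase x) = Fintype.card ↥((Finset.range n).erase 0) := by
    rw [Fintype.card_coe, Fintype.card_coe, Finset.card_erase_of_mem hxV,
      Finset.card_erase_of_mem (Finset.mem_range.mpr (by omega)), hV, Finset.card_range]
  set φ := Fintype.equivOfCardEq hcard1 with hφ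
  set f : ℕ → ℕ := fun v => if h : v ∈ H.verts.erase x then (φ ⟨v, h⟩ : ℕ) else 0 with hf
  have hfx : f x = 0 := by
    rw [hf]
    simp only [dif_neg (fun h => (Finset.mem_erase.mp h).1 rfl)]
  have hfval : ∀ v (h : v ∈ H.verts.erase x), f v = (φ ⟨v, h⟩ : ℕ) := by
    intro v h
    rw [hf]
    simp only [dif_pos h]
  have hfmem : ∀ v (h : v ∈ H.verts.erase x), f v ∈ (Finset.range n).erase 0 := by
    intro v h
    rw [hfval v h]
    exact (φ ⟨v, h⟩).2
  have hinj : Set.InjOn f ↑H.verts := by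
    intro u hu v hv huv
    rw [Finset.mem_coe] at hu hv
    by_cases hux : u = x <;> by_cases hvx : v = x
    · rw [hux, hvx]
    · exfalso
      have h1 : v ∈ H.verts.erase x := Finset.mem_erase.mpr ⟨hvx, hv⟩
      have := hfmem v h1
      rw [← huv, hux, hfx] at this
      exact (Finset.mem_erase.mp this).1 rfl
    · exfalso
      have h1 : u ∈ H.verts.erase x := Finset.mem_erase.mpr ⟨hux, hu⟩
      have := hfmem u h1
      rw [huv, hvx, hfx] at this
      exact (Finset.mem_erase.mp this).1 rfl
    · have h1 : u ∈ H.verts.erase x := Finset.mem_erase.mpr ⟨hux, hu⟩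
      have h2 : v ∈ H.verts.erase x := Finset.mem_erase.mpr ⟨hvx, hv⟩
      rw [hfval u h1, hfval v h2] at huv
      have := φ.injective (Subtype.ext huv)
      exact congrArg Subtype.val this
  have hverts : H.verts.image f = (starS n).verts := by
    have hstep : (H.verts.erase x).image f = (Finset.range n).erase 0 := by
      apply Finset.Subset.antisymm
      · intro y hy
        obtain ⟨v, hv, rfl⟩ := Finset.mem_image.mp hy
        exact hfmem v hv
      · intro y hy
        refine Finset.mem_image.mpr ⟨(φ.symm ⟨y, hy⟩ : ℕ), (φ.symm ⟨y, hy⟩).2, ?_⟩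
        have h2 : (⟨(φ.symm ⟨y, hy⟩ : ℕ), (φ.symm ⟨y, hy⟩).2⟩ :
            {z // z ∈ H.verts.erase x}) = φ.symm ⟨y, hy⟩ := rfl
        rw [hfval _ (φ.symm ⟨y, hy⟩).2, h2, Equiv.apply_symm_apply]
    have hins : H.verts = insert x (H.verts.erase x) := (Finset.insert_erase hxV).symm
    rw [show (starS n).verts = Finset.range n from rfl]
    conv_lhs => rw [hins]
    rw [Finset.image_insert, hfx, hstep,
      Finset.insert_erase (Finset.mem_range.mpr (by omega))]
  have hedges : H.edges.image (fun e => e.image f) = (starS n).edges := by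
    have hsub : H.edges.image (fun e => e.image f) ⊆ (starS n).edges := by
      intro g hg
      obtain ⟨e, he, rfl⟩ := Finset.mem_image.mp hg
      have he' := Finset.mem_filter.mp (hAeq ▸ he)
      obtain ⟨hesub, hecard⟩ := Finset.mem_powersetCard.mp he'.1
      rw [starS_edges, Finset.mem_filter, Finset.mem_powersetCard]
      refine ⟨⟨?_, ?_⟩, ?_⟩
      · intro y hy
        obtain ⟨v, hv, rfl⟩ := Finset.mem_image.mp hy
        have : f v ∈ H.verts.image f := Finset.mem_image_of_mem f (hesub hv)
        rw [hverts] at this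
        exact this
      · rw [Finset.card_image_of_injOn (hinj.mono (by
          intro z hz
          exact hesub hz)), hecard]
      · rw [← hfx]
        exact Finset.mem_image_of_mem f he'.2
    apply Finset.eq_of_subset_of_card_le hsub
    have himgcard : (H.edges.image (fun e => e.image f)).card = H.edges.card := by
      apply Finset.card_image_of_injOn
      intro e he g hg heg
      have hesub : e ⊆ H.verts := H.sub e he
      have hgsub : g ⊆ H.verts := H.sub g hg
      apply Finset.Subset.antisymm
      · intro z hz
        have : f z ∈ g.image f := by
          rw [← show e.image f = g.image f from heg]
          exact Finset.mem_image_of_mem f hz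
        obtain ⟨w, hw, hwz⟩ := Finset.mem_image.mp this
        rwa [← hinj (hgsub hw) (hesub hz) hwz]
      · intro z hz
        have : f z ∈ e.image f := by
          rw [show e.image f = g.image f from heg]
          exact Finset.mem_image_of_mem f hz
        obtain ⟨w, hw, hwz⟩ := Finset.mem_image.mp this
        rwa [← hinj (hesub hw) (hgsub hz) hwz]
    rw [himgcard]
    have hHcard : H.edges.card = (n - 1).choose 2 := by
      rw [hAeq, star_count hxV, hV]
    rw [starS_card n (by omega), hHcard]
  exact ⟨f, hinj, hverts, hedges⟩

end EKR

open ThreeGraph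
/-- Erdős–Ko–Rado: for `n ≥ 6`, `ex⁽¹⁾(n;M) = binom(n-1,2)`, and for
`n ≥ 7` the full star `S_n` is the unique extremal `M`-free 3-graph. -/
theorem turan_matching_M (n : ℕ) (hn : 6 ≤ n) :
    (∀ H : ThreeGraph, H.verts.card = n → ¬ HasCopy matchM H →
      H.edges.card ≤ (n - 1).choose 2) ∧
    ((starS n).verts.card = n ∧ ¬ HasCopy matchM (starS n) ∧
      (starS n).edges.card = (n - 1).choose 2) ∧
    (7 ≤ n → ∀ H : ThreeGraph, H.verts.card = n → ¬ HasCopy matchM H →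
      H.edges.card = (n - 1).choose 2 → Iso H (starS n)) := by
  refine ⟨?_, ⟨?_, ?_, ?_⟩, ?_⟩
  · intro H hV hno
    have hint := EKR.intersecting_of_noCopy H hno
    have := EKR.ekr_bound (fun e he => ⟨H.sub e he, H.card3 e he⟩) hint
      (by rw [hV]; exact hn)
    rwa [hV] at this
  · show (Finset.range n).card = n
    exact Finset.card_range n
  · exact EKR.noCopy_of_intersecting _ (EKR.starS_int n)
  · exact EKR.starS_card n (by omega)
  · intro h7 H hV hno hcard
    have hint := EKR.intersecting_of_noCopy H hno
    obtain ⟨x, hxV, hAeq⟩ := EKR.star_eq (fun e he => ⟨H.sub e he, H.card3 e he⟩) hint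
      (by rw [hV]; exact h7) (by rw [hV]; exact hcard)
    exact EKR.iso_star H h7 hV hxV hAeq
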